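/- arXiv:1312.0670 — 2 statements merged into one kernel-verified Lean document; each statement's English description precedes it below -/
import Mathlib

section
/- Multiplication is not definable in Presburger arithmetic: there is no first-order formula φ(x,y,z) in the language {+, <, 0, 1} such that for all natural numbers a, b, c, ⟨ℕ, +, <, 0, 1⟩ ⊨ φ(a,b,c) if and only if a·b = c. -/
open FirstOrder FirstOrder.Language FirstOrder.Language.Structure

/-- The function symbols of the language of Presburger arithmetic `{0, 1, +}`. -/
inductive PresFunc : ℕ → Type
  | zero : PresFunc 0
  | one : PresFunc 0
  | add : PresFunc 2
  deriving DecidableEq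

/-- The relation symbols of the language of Presburger arithmetic: `<`. -/
inductive PresRel : ℕ → Type
  | lt : PresRel 2
  deriving DecidableEq

/-- The language `⟨+, <, 0, 1⟩` of Presburger arithmetic. -/
def Lpres : FirstOrder.Language := ⟨PresFunc, PresRel⟩

/-- The standard interpretation of the language of Presburger arithmetic in `ℕ`. -/
instance : Lpres.Structure ℕ where
  funMap := fun {_} f v =>
    match f with
    | .zero => 0
    | .one => 1
    | .add => v 0 + v 1
  RelMap := fun {_} r v =>
    match r with
    | .lt => v 0 < v 1



set_option linter.unusedSectionVars false
set_option maxHeartbeats 1000000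

namespace PresQE

variable {α β : Type} [Fintype α] [DecidableEq α] [Fintype β] [DecidableEq β]

/-- Evaluation of an integer linear form on a natural-number valuation. -/
def evalLin (a : α → ℤ) (v : α → ℕ) : ℤ := ∑ i, a i * (v i : ℤ)

theorem evalLin_neg (a : α → ℤ) (v : α → ℕ) : evalLin (-a) v = - evalLin a v := by
  simp [evalLin, Finset.sum_neg_distrib]

/-- Atoms: linear inequalities and congruences (modulus `m+1`). -/
inductive Atom (α : Type) : Type
  | le (a : α → ℤ) (b : ℤ)
  | cong (a : α → ℤ) (b : ℤ) (m : ℕ)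

def Atom.eval : Atom α → (α → ℕ) → Prop
  | .le a b, v => evalLin a v ≤ b
  | .cong a b m, v => ((m : ℤ) + 1) ∣ (evalLin a v - b)

abbrev Basic (α : Type) := List (Atom α)

def Basic.eval (l : Basic α) (v : α → ℕ) : Prop := ∀ A ∈ l, A.eval v

abbrev DNF (α : Type) := List (Basic α)

def DNF.eval (d : DNF α) (v : α → ℕ) : Prop := ∃ l ∈ d, l.eval v

def DNF.or (d e : DNF α) : DNF α := d ++ e

@[simp] theorem DNF.eval_or (d e : DNF α) (v : α → ℕ) :
    (d.or e).eval v ↔ d.eval v ∨ e.eval v := by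
  simp [DNF.or, DNF.eval, List.mem_append, or_and_right, exists_or]

def DNF.and (d e : DNF α) : DNF α := d.flatMap fun l => e.map fun l' => l ++ l'

@[simp] theorem DNF.eval_and (d e : DNF α) (v : α → ℕ) :
    (d.and e).eval v ↔ d.eval v ∧ e.eval v := by
  constructor
  · rintro ⟨l, hl, hev⟩
    simp only [DNF.and, List.mem_flatMap, List.mem_map] at hl
    obtain ⟨l₁, h₁, l₂, h₂, rfl⟩ := hl
    exact ⟨⟨l₁, h₁, fun A hA => hev A (by simp [hA])⟩,
      ⟨l₂, h₂, fun A hA => hev A (by simp [hA])⟩⟩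
  · rintro ⟨⟨l₁, h₁, hev₁⟩, ⟨l₂, h₂, hev₂⟩⟩
    refine ⟨l₁ ++ l₂, ?_, ?_⟩
    · simp only [DNF.and, List.mem_flatMap, List.mem_map]
      exact ⟨l₁, h₁, l₂, h₂, rfl⟩
    intro A hA
    rcases List.mem_append.1 hA with h | h
    · exact hev₁ A h
    · exact hev₂ A h

/-- Negation of an atom, as a DNF. -/
def Atom.neg : Atom α → DNF α
  | .le a b => [ [.le (-a) (-b - 1)] ]
  | .cong a b m => (List.range m).map fun j : ℕ => [.cong a (b + (j : ℤ) + 1) m]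

theorem Atom.eval_neg (A : Atom α) (v : α → ℕ) : A.neg.eval v ↔ ¬ A.eval v := by
  cases A with
  | le a b =>
    simp only [Atom.neg, DNF.eval, List.mem_singleton, Basic.eval, Atom.eval]
    constructor
    · rintro ⟨l, rfl, h⟩
      have := h (.le (-a) (-b - 1)) (by simp)
      simp only [Atom.eval, evalLin_neg] at this
      omega
    · intro h
      refine ⟨_, rfl, ?_⟩
      intro A hA
      simp only [List.mem_singleton] at hA
      subst hA
      simp only [Atom.eval, evalLin_neg]
      omega
  | cong a b m =>
    constructor
    · intro hex hdvd
      simp only [Atom.eval] at hdvd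
      obtain ⟨l, hl, h⟩ := hex
      simp only [Atom.neg, List.mem_map] at hl
      obtain ⟨j, hj, rfl⟩ := hl
      have hjm : j < m := List.mem_range.mp hj
      have h2 := h (.cong a (b + j + 1) m) (List.mem_singleton.mpr rfl)
      simp only [Atom.eval] at h2
      have hd : ((m : ℤ) + 1) ∣ ((j : ℤ) + 1) := by
        have hsub := dvd_sub hdvd h2
        have heq : evalLin a v - b - (evalLin a v - (b + j + 1)) = (j : ℤ) + 1 := by ring
        rwa [heq] at hsub
      have hle : ((m : ℤ) + 1) ≤ (j : ℤ) + 1 := Int.le_of_dvd (by omega) hd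
      omega
    · intro h
      simp only [Atom.eval] at h
      set t := evalLin a v - b with ht
      have hm : (0 : ℤ) < (m : ℤ) + 1 := by positivity
      set r := t % ((m : ℤ) + 1) with hr
      have hr0 : 0 ≤ r := Int.emod_nonneg t (by omega)
      have hrlt : r < (m : ℤ) + 1 := Int.emod_lt_of_pos t hm
      have hrne : r ≠ 0 := by
        intro h0
        exact h (Int.dvd_of_emod_eq_zero (by omega))
      have hdvd : ((m : ℤ) + 1) ∣ (t - r) := by
        refine ⟨t / ((m : ℤ) + 1), ?_⟩
        rw [hr, Int.emod_def]
        ring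
      obtain ⟨jn, hjn⟩ : ∃ jn : ℕ, (jn : ℤ) = r - 1 := ⟨r.toNat - 1, by omega⟩
      have hjnm : jn ∈ List.range m := List.mem_range.mpr (by omega)
      refine ⟨[.cong a (b + jn + 1) m], ?_, ?_⟩
      · exact List.mem_map_of_mem hjnm
      · intro A hA
        simp only [List.mem_singleton] at hA
        subst hA
        simp only [Atom.eval]
        have heq : evalLin a v - (b + jn + 1) = t - r := by omega
        rw [heq]
        exact hdvd

def Basic.negDNF (l : Basic α) : DNF α := l.foldr (fun A d => (Atom.neg A).or d) []

theorem Basic.eval_negDNF (l : Basic α) (v : α → ℕ) : l.negDNF.eval v ↔ ¬ l.eval v := by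
  induction l with
  | nil => simp [Basic.negDNF, Basic.eval, DNF.eval]
  | cons A rest ih =>
    simp only [Basic.negDNF, List.foldr_cons] at *
    rw [DNF.eval_or, ih, Atom.eval_neg]
    simp only [Basic.eval, List.mem_cons]
    constructor
    · rintro (h | h) hall
      · exact h (hall A (Or.inl rfl))
      · exact h fun B hB => hall B (Or.inr hB)
    · intro h
      by_cases hA : A.eval v
      · refine Or.inr fun hrest => h ?_
        rintro B (rfl | hB)
        · exact hA
        · exact hrest B hB
      · exact Or.inl hA

def DNF.neg (d : DNF α) : DNF α := d.foldr (fun l e => l.negDNF.and e) [([] : Basic α)]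

theorem DNF.eval_neg (d : DNF α) (v : α → ℕ) : d.neg.eval v ↔ ¬ d.eval v := by
  induction d with
  | nil => simp [DNF.neg, DNF.eval, Basic.eval]
  | cons l rest ih =>
    simp only [DNF.neg, List.foldr_cons] at *
    rw [DNF.eval_and, ih, Basic.eval_negDNF]
    simp only [DNF.eval, List.mem_cons]
    constructor
    · rintro ⟨h1, h2⟩ ⟨l', rfl | hl', hev⟩
      · exact h1 hev
      · exact h2 ⟨l', hl', hev⟩
    · intro h
      constructor
      · intro hev
        exact h ⟨l, Or.inl rfl, hev⟩
      · rintro ⟨l', hl', hev⟩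
        exact h ⟨l', Or.inr hl', hev⟩


-- relabeling along an equivalence
def Atom.relabel (e : α ≃ β) : Atom α → Atom β
  | .le a b => .le (a ∘ e.symm) b
  | .cong a b m => .cong (a ∘ e.symm) b m

theorem evalLin_relabel (e : α ≃ β) (a : α → ℤ) (w : β → ℕ) :
    evalLin (a ∘ e.symm) w = evalLin a (w ∘ e) := by
  unfold evalLin
  simp only [Function.comp_apply]
  rw [← Equiv.sum_comp e (fun j => a (e.symm j) * (w j : ℤ))]
  exact Finset.sum_congr rfl fun i _ => by simp

theorem Atom.eval_relabel (e : α ≃ β) (A : Atom α) (w : β → ℕ) :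
    (A.relabel e).eval w ↔ A.eval (w ∘ e) := by
  cases A <;> simp only [Atom.relabel, Atom.eval, evalLin_relabel]

def DNF.relabel (e : α ≃ β) (d : DNF α) : DNF β := d.map fun l => l.map (Atom.relabel e)

theorem DNF.eval_relabel (e : α ≃ β) (d : DNF α) (w : β → ℕ) :
    (d.relabel e).eval w ↔ d.eval (w ∘ e) := by
  unfold DNF.relabel DNF.eval
  constructor
  · rintro ⟨l', hl', hev⟩
    obtain ⟨l, hl, rfl⟩ := List.mem_map.mp hl'
    refine ⟨l, hl, fun A hA => ?_⟩
    have := hev (A.relabel e) (List.mem_map_of_mem hA)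
    rwa [Atom.eval_relabel] at this
  · rintro ⟨l, hl, hev⟩
    refine ⟨l.map (Atom.relabel e), List.mem_map_of_mem hl, fun A' hA' => ?_⟩
    obtain ⟨A, hA, rfl⟩ := List.mem_map.mp hA'
    rw [Atom.eval_relabel]
    exact hev A hA

-- extending a valuation at `none`
def extOpt (v : α → ℕ) (x : ℕ) : Option α → ℕ := fun o => o.elim x v

theorem evalLin_extOpt (a : Option α → ℤ) (v : α → ℕ) (x : ℕ) :
    evalLin a (extOpt v x) = a none * (x : ℤ) + evalLin (a ∘ some) v := by
  unfold evalLin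
  rw [Fintype.sum_option]
  rfl

theorem evalLin_add_mul (f g : α → ℤ) (c : ℤ) (v : α → ℕ) :
    evalLin (fun i => f i + c * g i) v = evalLin f v + c * evalLin g v := by
  unfold evalLin
  rw [Finset.mul_sum, ← Finset.sum_add_distrib]
  exact Finset.sum_congr rfl fun i _ => by ring

-- substitution of y := evalLin aL v - bL + j
def Atom.subst (aL : α → ℤ) (bL : ℤ) (j : ℕ) : Atom (Option α) → Atom α
  | .le a b => .le (fun i => a (some i) + a none * aL i) (b + a none * bL - a none * (j : ℤ))
  | .cong a b m =>
      .cong (fun i => a (some i) + a none * aL i) (b + a none * bL - a none * (j : ℤ)) m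

theorem Atom.eval_subst (aL : α → ℤ) (bL : ℤ) (j : ℕ) (A : Atom (Option α)) (v : α → ℕ)
    (x : ℕ) (hx : (x : ℤ) = evalLin aL v - bL + (j : ℤ)) :
    (A.subst aL bL j).eval v ↔ A.eval (extOpt v x) := by
  cases A with
  | le a b =>
    simp only [Atom.subst, Atom.eval, evalLin_add_mul, evalLin_extOpt, hx, Function.comp_def]
    have hexp : a none * (evalLin aL v - bL + (j : ℤ))
        = a none * evalLin aL v - a none * bL + a none * (j : ℤ) := by ring
    constructor <;> intro h <;> linarith
  | cong a b m =>
    simp only [Atom.subst, Atom.eval, evalLin_add_mul, evalLin_extOpt, hx, Function.comp_def]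
    have heq : evalLin (fun i => a (some i)) v + a none * evalLin aL v - (b + a none * bL - a none * (j:ℤ))
        = a none * (evalLin aL v - bL + (j:ℤ)) + evalLin (fun i => a (some i)) v - b := by ring
    rw [heq]


end PresQE

-- lcm of a list
def lcmList (ns : List ℕ) : ℕ := ns.foldr Nat.lcm 1

theorem lcmList_pos (ns : List ℕ) (h : ∀ n ∈ ns, 0 < n) : 0 < lcmList ns := by
  induction ns with
  | nil => simp [lcmList]
  | cons n ns ih =>
    simp only [lcmList, List.foldr_cons]
    exact Nat.lcm_pos (h n (by simp)) (ih fun k hk => h k (by simp [hk]))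

theorem dvd_lcmList (ns : List ℕ) (n : ℕ) (h : n ∈ ns) : n ∣ lcmList ns := by
  induction ns with
  | nil => simp at h
  | cons k ns ih =>
    simp only [lcmList, List.foldr_cons]
    rcases List.mem_cons.mp h with rfl | h
    · exact Nat.dvd_lcm_left _ _
    · exact (ih h).trans (Nat.dvd_lcm_right _ _)

namespace PresQE

variable {α : Type} [Fintype α] [DecidableEq α]

def Atom.coefNat : Atom (Option α) → ℕ
  | .le a _ => if a none = 0 then 1 else (a none).natAbs
  | .cong a _ _ => if a none = 0 then 1 else (a none).natAbs

theorem Atom.coefNat_pos (A : Atom (Option α)) : 0 < A.coefNat := by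
  cases A <;> simp only [Atom.coefNat] <;> split <;> simp_all [Int.natAbs_pos]

/-- the coefficient of the distinguished variable -/
def Atom.coef : Atom (Option α) → ℤ
  | .le a _ => a none
  | .cong a _ _ => a none

/-- Multiply an atom through so that the distinguished variable, rescaled to `L·y`,
has coefficient `sign (old coefficient)`. -/
def Atom.norm (L : ℕ) : Atom (Option α) → Atom (Option α)
  | .le a b =>
      let k : ℤ := ((L / Atom.coefNat (.le a b) : ℕ) : ℤ)
      .le (fun o => o.elim ((a none).sign) (fun i => k * a (some i))) (k * b)
  | .cong a b m =>
      let kN : ℕ := L / Atom.coefNat (.cong a b m)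
      .cong (fun o => o.elim ((a none).sign) (fun i => (kN : ℤ) * a (some i)))
        ((kN : ℤ) * b) (kN * (m + 1) - 1)

theorem Atom.eval_norm (L : ℕ) (hL : 0 < L) (A : Atom (Option α)) (hdvd : A.coefNat ∣ L)
    (v : α → ℕ) (x : ℕ) :
    (A.norm L).eval (extOpt v (L * x)) ↔ A.eval (extOpt v x) := by
  have hkey : ∀ a : Option α → ℤ, ∀ c : ℕ, c = (if a none = 0 then 1 else (a none).natAbs) →
      c ∣ L → ((L / c : ℕ) : ℤ) * a none = (a none).sign * (L : ℤ) := by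
    intro a c hc hcd
    by_cases h0 : a none = 0
    · simp [h0]
    · have habs : c = (a none).natAbs := by simp [hc, h0]
      have h1 : ((L / c : ℕ) : ℤ) * (c : ℤ) = (L : ℤ) := by
        exact_mod_cast congrArg (Nat.cast : ℕ → ℤ) (Nat.div_mul_cancel hcd)
      calc ((L / c : ℕ) : ℤ) * a none
          = ((L / c : ℕ) : ℤ) * ((a none).sign * ((a none).natAbs : ℤ)) := by
            rw [Int.sign_mul_natAbs]
        _ = (a none).sign * (((L / c : ℕ) : ℤ) * (c : ℤ)) := by rw [habs]; ring
        _ = (a none).sign * (L : ℤ) := by rw [h1]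
  cases A with
  | le a b =>
    have hdvd' : Atom.coefNat (Atom.le a b) ∣ L := hdvd
    have hc := hkey a (Atom.coefNat (Atom.le a b)) (by simp [Atom.coefNat]) hdvd'
    have hkpos : 0 < L / Atom.coefNat (Atom.le a b) :=
      Nat.div_pos (Nat.le_of_dvd hL hdvd') (Atom.coefNat_pos _)
    set kN : ℕ := L / Atom.coefNat (Atom.le a b) with hkN
    have hk' : (0 : ℤ) < (kN : ℤ) := by exact_mod_cast hkpos
    have hEq : evalLin (fun o : Option α => o.elim ((a none).sign) fun i => (kN:ℤ) * a (some i))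
        (extOpt v (L * x)) = (kN : ℤ) * evalLin a (extOpt v x) := by
      rw [evalLin_extOpt, evalLin_extOpt]
      have e1 : evalLin ((fun o : Option α => o.elim ((a none).sign) fun i => (kN:ℤ) * a (some i)) ∘ some) v
          = (kN:ℤ) * evalLin (a ∘ some) v := by
        unfold evalLin
        rw [Finset.mul_sum]
        exact Finset.sum_congr rfl fun i _ => by simp [mul_assoc]
      rw [e1]
      have e3 : ((L * x : ℕ) : ℤ) = (L:ℤ) * (x:ℤ) := by push_cast; ring
      show (a none).sign * ((L * x : ℕ) : ℤ) + _ = _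
      rw [e3]
      have e4 : (a none).sign * ((L:ℤ) * (x:ℤ)) = ((kN:ℤ) * a none) * (x:ℤ) := by
        rw [hc]; ring
      rw [e4]; ring
    simp only [Atom.norm, Atom.eval]
    rw [hEq]
    constructor
    · intro h
      exact le_of_mul_le_mul_left h hk'
    · intro h
      exact mul_le_mul_of_nonneg_left h hk'.le
  | cong a b m =>
    have hdvd' : Atom.coefNat (Atom.cong a b m) ∣ L := hdvd
    have hc := hkey a (Atom.coefNat (Atom.cong a b m)) (by simp [Atom.coefNat]) hdvd'
    have hkpos : 0 < L / Atom.coefNat (Atom.cong a b m) :=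
      Nat.div_pos (Nat.le_of_dvd hL hdvd') (Atom.coefNat_pos _)
    set kN : ℕ := L / Atom.coefNat (Atom.cong a b m) with hkN
    have hk0 : (kN : ℤ) ≠ 0 := by exact_mod_cast hkpos.ne'
    have hEq : evalLin (fun o : Option α => o.elim ((a none).sign) fun i => (kN:ℤ) * a (some i))
        (extOpt v (L * x)) = (kN : ℤ) * evalLin a (extOpt v x) := by
      rw [evalLin_extOpt, evalLin_extOpt]
      have e1 : evalLin ((fun o : Option α => o.elim ((a none).sign) fun i => (kN:ℤ) * a (some i)) ∘ some) v
          = (kN:ℤ) * evalLin (a ∘ some) v := by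
        unfold evalLin
        rw [Finset.mul_sum]
        exact Finset.sum_congr rfl fun i _ => by simp [mul_assoc]
      rw [e1]
      have e3 : ((L * x : ℕ) : ℤ) = (L:ℤ) * (x:ℤ) := by push_cast; ring
      show (a none).sign * ((L * x : ℕ) : ℤ) + _ = _
      rw [e3]
      have e4 : (a none).sign * ((L:ℤ) * (x:ℤ)) = ((kN:ℤ) * a none) * (x:ℤ) := by
        rw [hc]; ring
      rw [e4]; ring
    simp only [Atom.norm, Atom.eval]
    rw [hEq]
    have hone : 1 ≤ kN * (m + 1) := Nat.one_le_iff_ne_zero.mpr (by positivity)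
    have hmod : ((kN * (m + 1) - 1 : ℕ) : ℤ) + 1 = (kN : ℤ) * ((m : ℤ) + 1) := by
      have := Nat.cast_sub (R := ℤ) hone
      push_cast at this ⊢
      omega
    rw [hmod]
    have hfac : (kN : ℤ) * evalLin a (extOpt v x) - (kN : ℤ) * b
        = (kN : ℤ) * (evalLin a (extOpt v x) - b) := by ring
    rw [hfac]
    exact mul_dvd_mul_iff_left hk0

end PresQE

namespace PresQE

variable {α : Type} [Fintype α] [DecidableEq α]

theorem exists_list_max (xs : List ℤ) (h : xs ≠ []) : ∃ m ∈ xs, ∀ z ∈ xs, z ≤ m := by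
  induction xs with
  | nil => simp at h
  | cons a xs ih =>
    rcases eq_or_ne xs [] with rfl | hne
    · exact ⟨a, by simp, by simp⟩
    · obtain ⟨m, hm, hmax⟩ := ih hne
      rcases le_total a m with hle | hle
      · exact ⟨m, by simp [hm], by
          intro z hz
          rcases List.mem_cons.mp hz with rfl | hz
          · exact hle
          · exact hmax z hz⟩
      · exact ⟨a, by simp, by
          intro z hz
          rcases List.mem_cons.mp hz with rfl | hz
          · exact le_refl _
          · exact (hmax z hz).trans hle⟩

def nonNegAtom : Atom (Option α) := .le (fun o => o.elim (-1) (fun _ => 0)) 0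

def modAtom (L : ℕ) : Atom (Option α) := .cong (fun o => o.elim 1 (fun _ => 0)) 0 (L - 1)

def Basic.bigL (l : Basic (Option α)) : ℕ := lcmList (l.map Atom.coefNat)

theorem Basic.bigL_pos (l : Basic (Option α)) : 0 < l.bigL := by
  apply lcmList_pos
  intro n hn
  obtain ⟨A, _, rfl⟩ := List.mem_map.mp hn
  exact Atom.coefNat_pos A

theorem Basic.coefNat_dvd_bigL (l : Basic (Option α)) (A : Atom (Option α)) (hA : A ∈ l) :
    A.coefNat ∣ l.bigL :=
  dvd_lcmList _ _ (List.mem_map_of_mem hA)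

def Basic.normed (l : Basic (Option α)) : Basic (Option α) :=
  (l.map (Atom.norm l.bigL)) ++ [nonNegAtom, modAtom l.bigL]

theorem evalLin_zero_some (c : ℤ) (v : α → ℕ) :
    evalLin (fun i : α => (fun o : Option α => o.elim c (fun _ => 0)) (some i)) v = 0 := by
  simp [evalLin]

theorem nonNegAtom_eval (v : α → ℕ) (y : ℕ) :
    (nonNegAtom (α := α)).eval (extOpt v y) ↔ True := by
  have hev : evalLin (fun o : Option α => o.elim (-1 : ℤ) (fun _ => 0)) (extOpt v y)
      = -(y : ℤ) := by
    unfold evalLin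
    rw [Fintype.sum_option]
    simp [extOpt]
  simp only [nonNegAtom, Atom.eval, hev, iff_true]
  omega

theorem modAtom_eval (L : ℕ) (hL : 0 < L) (v : α → ℕ) (y : ℕ) :
    (modAtom (α := α) L).eval (extOpt v y) ↔ (L : ℤ) ∣ (y : ℤ) := by
  have hev : evalLin (fun o : Option α => o.elim (1 : ℤ) (fun _ => 0)) (extOpt v y)
      = (y : ℤ) := by
    unfold evalLin
    rw [Fintype.sum_option]
    simp [extOpt]
  have h3 : ((L - 1 : ℕ) : ℤ) + 1 = (L : ℤ) := by omega
  simp only [modAtom, Atom.eval, hev, h3, sub_zero]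

theorem Basic.exists_normed (l : Basic (Option α)) (v : α → ℕ) :
    (∃ x, l.eval (extOpt v x)) ↔ ∃ y, l.normed.eval (extOpt v y) := by
  have hL := l.bigL_pos
  constructor
  · rintro ⟨x, hx⟩
    refine ⟨l.bigL * x, ?_⟩
    intro A' hA'
    rcases List.mem_append.mp hA' with h | h
    · obtain ⟨A, hA, rfl⟩ := List.mem_map.mp h
      exact (Atom.eval_norm _ hL A (l.coefNat_dvd_bigL A hA) v x).mpr (hx A hA)
    · rcases List.mem_cons.mp h with rfl | h
      · exact (nonNegAtom_eval v _).mpr trivial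
      · rcases List.mem_cons.mp h with rfl | h
        · rw [modAtom_eval _ hL]
          exact ⟨x, by push_cast; ring⟩
        · simp at h
  · rintro ⟨y, hy⟩
    have hdvd : (l.bigL : ℤ) ∣ (y : ℤ) := by
      rw [← modAtom_eval _ hL v y]
      exact hy _ (List.mem_append.mpr (Or.inr (by simp)))
    obtain ⟨x, hxy⟩ := Int.natCast_dvd_natCast.mp hdvd
    subst hxy
    refine ⟨x, fun A hA => ?_⟩
    exact (Atom.eval_norm _ hL A (l.coefNat_dvd_bigL A hA) v x).mp
      (hy _ (List.mem_append.mpr (Or.inl (List.mem_map_of_mem hA))))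

end PresQE

namespace PresQE

variable {α : Type} [Fintype α] [DecidableEq α]

def Basic.lowers (l : Basic (Option α)) : List ((α → ℤ) × ℤ) :=
  l.filterMap fun A =>
    match A with
    | .le a b => if a none = -1 then some (fun i => a (some i), b) else none
    | .cong _ _ _ => none

def Basic.delta (l : Basic (Option α)) : ℕ :=
  lcmList (l.map fun A =>
    match A with
    | .cong _ _ m => m + 1
    | .le _ _ => 1)

theorem Basic.delta_pos (l : Basic (Option α)) : 0 < l.delta := by
  apply lcmList_pos
  intro n hn
  obtain ⟨A, _, rfl⟩ := List.mem_map.mp hn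
  cases A <;> simp

theorem Basic.cong_dvd_delta (l : Basic (Option α)) (a : Option α → ℤ) (b : ℤ) (m : ℕ)
    (hA : Atom.cong a b m ∈ l) : (m + 1) ∣ l.delta := by
  apply dvd_lcmList
  have := List.mem_map_of_mem (f := fun A : Atom (Option α) =>
    match A with
    | .cong _ _ m => m + 1
    | .le _ _ => 1) hA
  exact this

def Basic.cooper (l : Basic (Option α)) : DNF α :=
  l.lowers.flatMap fun p =>
    (List.range l.delta).map fun j : ℕ => l.map (Atom.subst p.1 p.2 j)

theorem Basic.mem_lowers (l : Basic (Option α)) (a : Option α → ℤ) (b : ℤ)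
    (hA : Atom.le a b ∈ l) (hc : a none = -1) : ((fun i => a (some i)), b) ∈ l.lowers := by
  apply List.mem_filterMap.mpr
  exact ⟨Atom.le a b, hA, by simp [hc]⟩

theorem Basic.cooper_eval (l : Basic (Option α)) (hnn : nonNegAtom ∈ l)
    (hcoef : ∀ a b, Atom.le a b ∈ l → a none = -1 ∨ a none = 0 ∨ a none = 1)
    (v : α → ℕ) :
    l.cooper.eval v ↔ ∃ x : ℕ, l.eval (extOpt v x) := by
  constructor
  · -- soundness
    rintro ⟨bas, hbas, hev⟩
    simp only [Basic.cooper, List.mem_flatMap, List.mem_map] at hbas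
    obtain ⟨p, hp, j, _, rfl⟩ := hbas
    -- the substituted nonneg atom gives nonnegativity of the value
    have hnn' := hev _ (List.mem_map_of_mem (f := Atom.subst p.1 p.2 j) hnn)
    have hnneval : 0 ≤ evalLin p.1 v - p.2 + (j : ℤ) := by
      simp only [nonNegAtom, Atom.subst, Atom.eval] at hnn'
      have h1 : evalLin (fun i : α =>
          (fun o : Option α => o.elim (-1 : ℤ) (fun _ => 0)) (some i)
            + (fun o : Option α => o.elim (-1 : ℤ) (fun _ => 0)) none * p.1 i) v
          = - evalLin p.1 v := by
        unfold evalLin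
        rw [← Finset.sum_neg_distrib]
        exact Finset.sum_congr rfl fun i _ => by simp
      rw [h1] at hnn'
      have h2 : ((none : Option α).elim (-1 : ℤ) fun _ => (0 : ℤ)) = -1 := rfl
      rw [h2] at hnn'
      linarith
    set t : ℤ := evalLin p.1 v - p.2 + (j : ℤ) with ht
    refine ⟨t.toNat, ?_⟩
    intro A hA
    have hx : ((t.toNat : ℕ) : ℤ) = evalLin p.1 v - p.2 + (j : ℤ) :=
      by rw [Int.toNat_of_nonneg hnneval]
    exact (Atom.eval_subst p.1 p.2 j A v t.toNat hx).mp
      (hev _ (List.mem_map_of_mem (f := Atom.subst p.1 p.2 j) hA))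
  · -- completeness
    rintro ⟨x, hx⟩
    set δ : ℕ := l.delta with hδdef
    have hδ : 0 < δ := l.delta_pos
    set vals : List ℤ := l.lowers.map (fun p => evalLin p.1 v - p.2) with hvals
    have hvne : vals ≠ [] := by
      have h0 : ((fun i : α => (fun o : Option α => o.elim (-1 : ℤ) (fun _ => 0)) (some i)), (0:ℤ))
          ∈ l.lowers := l.mem_lowers _ _ hnn rfl
      intro hemp
      have := List.mem_map_of_mem (f := fun p : (α → ℤ) × ℤ => evalLin p.1 v - p.2) h0
      rw [← hvals] at this
      simp [hemp] at this
    have hub : ∀ z ∈ vals, z ≤ (x : ℤ) := by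
      intro z hz
      obtain ⟨p, hp, rfl⟩ := List.mem_map.mp hz
      obtain ⟨A, hA, hmatch⟩ := List.mem_filterMap.mp hp
      cases A with
      | cong a b m => simp at hmatch
      | le a b =>
        simp only at hmatch
        by_cases hc : a none = -1
        · rw [if_pos hc] at hmatch
          obtain rfl := Option.some_injective _ hmatch
          have := hx _ hA
          simp only [Atom.eval, evalLin_extOpt, hc] at this
          have hcomp : evalLin (a ∘ some) v = evalLin (fun i => a (some i)) v := rfl
          rw [hcomp] at this
          simp only []
          linarith
        · rw [if_neg hc] at hmatch
          simp at hmatch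
    obtain ⟨mx, hmx, hmax⟩ := exists_list_max vals hvne
    have hnn2 : Atom.le (fun o : Option α => o.elim (-1 : ℤ) fun _ => (0 : ℤ)) 0 ∈ l := hnn
    have h0mem : (0 : ℤ) ∈ vals := by
      rw [hvals]
      refine List.mem_map.mpr ⟨_, l.mem_lowers _ _ hnn2 rfl, ?_⟩
      show evalLin (fun i : α => _) v - 0 = 0
      simp [evalLin]
    have hmx0 : (0 : ℤ) ≤ mx := hmax _ h0mem
    have hmxx : mx ≤ (x : ℤ) := hub _ hmx
    -- the shifted witness
    set jZ : ℤ := ((x : ℤ) - mx) % (δ : ℤ) with hjZ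
    have hδZ : (0 : ℤ) < (δ : ℤ) := by exact_mod_cast hδ
    have hj0 : 0 ≤ jZ := Int.emod_nonneg _ hδZ.ne'
    have hjlt : jZ < (δ : ℤ) := Int.emod_lt_of_pos _ hδZ
    have hjle : jZ ≤ (x : ℤ) - mx := by
      have hq : 0 ≤ ((x : ℤ) - mx) / (δ : ℤ) := Int.ediv_nonneg (by omega) hδZ.le
      have hd : jZ = ((x : ℤ) - mx) - (δ : ℤ) * (((x : ℤ) - mx) / (δ : ℤ)) := by
        rw [hjZ, Int.emod_def]
      nlinarith
    have hdvdstep : (δ : ℤ) ∣ ((x : ℤ) - (mx + jZ)) := by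
      refine ⟨((x : ℤ) - mx) / (δ : ℤ), ?_⟩
      have hd : jZ = ((x : ℤ) - mx) - (δ : ℤ) * (((x : ℤ) - mx) / (δ : ℤ)) := by
        rw [hjZ, Int.emod_def]
      linarith
    set x' : ℤ := mx + jZ with hx'
    have hx'0 : 0 ≤ x' := by omega
    have hx'le : x' ≤ (x : ℤ) := by omega
    set xn : ℕ := x'.toNat with hxn
    have hxnz : (xn : ℤ) = x' := Int.toNat_of_nonneg hx'0
    -- every atom holds at the shifted witness
    have hstep : ∀ A ∈ l, A.eval (extOpt v xn) := by
      intro A hA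
      cases A with
      | le a b =>
        have horig := hx _ hA
        simp only [Atom.eval, evalLin_extOpt] at horig ⊢
        rcases hcoef a b hA with hc | hc | hc
        · -- lower bound
          have hval : evalLin (fun i => a (some i)) v - b ∈ vals := by
            apply List.mem_map_of_mem (f := fun p : (α → ℤ) × ℤ => evalLin p.1 v - p.2)
              (l.mem_lowers a b hA hc)
          have hle := hmax _ hval
          rw [hc, hxnz]
          have hcomp : evalLin (a ∘ some) v = evalLin (fun i => a (some i)) v := rfl
          rw [hcomp]
          omega
        · rw [hc] at horig ⊢
          rw [hxnz]
          omega
        · rw [hc] at horig ⊢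
          rw [hxnz]
          omega
      | cong a b m =>
        have horig := hx _ hA
        simp only [Atom.eval, evalLin_extOpt] at horig ⊢
        have hdm : ((m : ℤ) + 1) ∣ (δ : ℤ) := by
          have := l.cong_dvd_delta a b m hA
          exact_mod_cast Int.natCast_dvd_natCast.mpr this
        have hd2 : ((m : ℤ) + 1) ∣ (x' - (x : ℤ)) := by
          have h' := hdm.trans hdvdstep
          rw [← neg_sub]
          exact dvd_neg.mpr h'
        have heq2 : a none * (xn : ℤ) + evalLin (a ∘ some) v - b
            = (a none * (x : ℤ) + evalLin (a ∘ some) v - b) + a none * ((xn : ℤ) - (x : ℤ)) := by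
          ring
        rw [heq2]
        refine dvd_add horig (Dvd.dvd.mul_left ?_ _)
        rw [hxnz]
        exact hd2
    -- assemble the disjunct
    rw [hvals] at hmx
    obtain ⟨p, hp, hpval⟩ := List.mem_map.mp hmx
    refine ⟨l.map (Atom.subst p.1 p.2 jZ.toNat), ?_, ?_⟩
    · simp only [Basic.cooper, List.mem_flatMap, List.mem_map]
      exact ⟨p, hp, jZ.toNat, List.mem_range.mpr (by omega), rfl⟩
    · intro A' hA'
      obtain ⟨A, hA, rfl⟩ := List.mem_map.mp hA'
      have hxeq : ((xn : ℕ) : ℤ) = evalLin p.1 v - p.2 + ((jZ.toNat : ℕ) : ℤ) := by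
        rw [hxnz, hx', Int.toNat_of_nonneg hj0, hpval]
      exact (Atom.eval_subst p.1 p.2 jZ.toNat A v xn hxeq).mpr (hstep A hA)
  
end PresQE

namespace PresQE

variable {α : Type} [Fintype α] [DecidableEq α]

theorem Basic.nonNeg_mem_normed (l : Basic (Option α)) : nonNegAtom ∈ l.normed := by
  simp [Basic.normed]

theorem Basic.normed_coef (l : Basic (Option α)) :
    ∀ a b, Atom.le a b ∈ l.normed → a none = -1 ∨ a none = 0 ∨ a none = 1 := by
  intro a b hab
  rcases List.mem_append.mp hab with h | h
  · obtain ⟨A, _, heq⟩ := List.mem_map.mp h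
    cases A with
    | le a' b' =>
      simp only [Atom.norm] at heq
      have ha : a = fun o : Option α =>
          o.elim ((a' none).sign) (fun i => ((l.bigL / (Atom.le a' b').coefNat : ℕ) : ℤ) * a' (some i)) := by
        cases heq; rfl
      have : a none = (a' none).sign := by rw [ha]; rfl
      rw [this]
      rcases Int.lt_trichotomy (a' none) 0 with h' | h' | h'
      · left; exact Int.sign_eq_neg_one_of_neg h'
      · right; left; rw [h']; rfl
      · right; right; exact Int.sign_eq_one_of_pos h'
    | cong a' b' m' => simp [Atom.norm] at heq
  · rcases List.mem_cons.mp h with heq | h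
    · have : a = fun o : Option α => o.elim (-1 : ℤ) fun _ => (0 : ℤ) := by
        cases heq; rfl
      left; rw [this]; rfl
    · rcases List.mem_cons.mp h with heq | h
      · cases heq
      · simp at h

def DNF.exElim (d : DNF (Option α)) : DNF α := d.flatMap fun l => l.normed.cooper

theorem DNF.eval_exElim (d : DNF (Option α)) (v : α → ℕ) :
    d.exElim.eval v ↔ ∃ x : ℕ, d.eval (extOpt v x) := by
  constructor
  · rintro ⟨bas, hbas, hev⟩
    simp only [DNF.exElim, List.mem_flatMap] at hbas
    obtain ⟨l, hl, hbas⟩ := hbas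
    have := (l.normed.cooper_eval l.nonNeg_mem_normed l.normed_coef v).mp ⟨bas, hbas, hev⟩
    obtain ⟨y, hy⟩ := this
    obtain ⟨x, hx⟩ := (l.exists_normed v).mpr ⟨y, hy⟩
    exact ⟨x, l, hl, hx⟩
  · rintro ⟨x, l, hl, hev⟩
    obtain ⟨y, hy⟩ := (l.exists_normed v).mp ⟨x, hev⟩
    obtain ⟨bas, hbas, hbev⟩ :=
      (l.normed.cooper_eval l.nonNeg_mem_normed l.normed_coef v).mpr ⟨y, hy⟩
    exact ⟨bas, by simp only [DNF.exElim, List.mem_flatMap]; exact ⟨l, hl, hbas⟩, hbev⟩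

end PresQE

namespace PresQE

variable {α : Type} [Fintype α] [DecidableEq α]

/-- Linear form (coefficients and constant) of a Presburger term. -/
def termLin : Lpres.Term α → (α → ℤ) × ℤ
  | .var i => (Pi.single i 1, 0)
  | .func .zero _ => (0, 0)
  | .func .one _ => (0, 1)
  | .func .add ts => termLin (ts 0) + termLin (ts 1)

theorem evalLin_add (f g : α → ℤ) (v : α → ℕ) :
    evalLin (f + g) v = evalLin f v + evalLin g v := by
  unfold evalLin
  rw [← Finset.sum_add_distrib]
  exact Finset.sum_congr rfl fun i _ => by simp [add_mul]

theorem evalLin_sub (f g : α → ℤ) (v : α → ℕ) :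
    evalLin (f - g) v = evalLin f v - evalLin g v := by
  unfold evalLin
  rw [← Finset.sum_sub_distrib]
  exact Finset.sum_congr rfl fun i _ => by simp [sub_mul]

theorem termLin_spec (t : Lpres.Term α) (v : α → ℕ) :
    ((t.realize (M := ℕ) v : ℕ) : ℤ) = evalLin (termLin t).1 v + (termLin t).2 := by
  induction t with
  | var i =>
    simp [Term.realize, termLin, evalLin, Pi.single_apply, ite_mul]
  | func f ts ih =>
    cases f with
    | zero =>
      simp [Term.realize, termLin, evalLin]
    | one =>
      simp [Term.realize, termLin, evalLin]
      rfl
    | add =>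
      have h0 := ih 0
      have h1 := ih 1
      have hreal : (Term.func PresFunc.add ts).realize (M := ℕ) v
          = (ts 0).realize v + (ts 1).realize v := rfl
      rw [hreal]
      simp only [termLin]
      rw [Prod.fst_add, Prod.snd_add, evalLin_add]
      push_cast
      omega

end PresQE
namespace PresQE

variable {α : Type} [Fintype α] [DecidableEq α]

def eqDNF (p q : (α → ℤ) × ℤ) : DNF α :=
  [ [.le (p.1 - q.1) (q.2 - p.2), .le (q.1 - p.1) (p.2 - q.2)] ]

theorem eqDNF_eval (p q : (α → ℤ) × ℤ) (v : α → ℕ) :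
    (eqDNF p q).eval v ↔ evalLin p.1 v + p.2 = evalLin q.1 v + q.2 := by
  simp only [eqDNF, DNF.eval, List.mem_singleton, Basic.eval]
  constructor
  · rintro ⟨l, rfl, h⟩
    have h1 := h _ (List.mem_cons_self)
    have h2 := h _ (List.mem_cons.mpr (Or.inr (List.mem_singleton.mpr rfl)))
    simp only [Atom.eval, evalLin_sub] at h1 h2
    omega
  · intro h
    refine ⟨_, rfl, ?_⟩
    intro A hA
    rcases List.mem_cons.mp hA with rfl | hA
    · simp only [Atom.eval, evalLin_sub]; omega
    · rcases List.mem_cons.mp hA with rfl | hA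
      · simp only [Atom.eval, evalLin_sub]; omega
      · simp at hA

def ltDNF (p q : (α → ℤ) × ℤ) : DNF α :=
  [ [.le (p.1 - q.1) (q.2 - p.2 - 1)] ]

theorem ltDNF_eval (p q : (α → ℤ) × ℤ) (v : α → ℕ) :
    (ltDNF p q).eval v ↔ evalLin p.1 v + p.2 < evalLin q.1 v + q.2 := by
  simp only [ltDNF, DNF.eval, List.mem_singleton, Basic.eval]
  constructor
  · rintro ⟨l, rfl, h⟩
    have h1 := h _ (List.mem_cons_self)
    simp only [Atom.eval, evalLin_sub] at h1
    omega
  · intro h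
    refine ⟨_, rfl, ?_⟩
    intro A hA
    rcases List.mem_cons.mp hA with rfl | hA
    · simp only [Atom.eval, evalLin_sub]; omega
    · simp at hA

def sumFinSuccEquiv (α : Type) (k : ℕ) : (α ⊕ Fin (k + 1)) ≃ Option (α ⊕ Fin k) where
  toFun := Sum.elim (fun a => some (Sum.inl a))
    (fun i => Fin.lastCases none (fun j => some (Sum.inr j)) i)
  invFun := fun o => o.elim (Sum.inr (Fin.last k))
    (Sum.elim (fun a => Sum.inl a) (fun j => Sum.inr j.castSucc))
  left_inv := by
    rintro (a | i)
    · rfl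
    · refine Fin.lastCases ?_ (fun j => ?_) i <;> simp
  right_inv := by
    rintro (_ | (a | j)) <;> simp

theorem extOpt_comp_sumFinSuccEquiv {k : ℕ} (v : α → ℕ) (xs : Fin k → ℕ) (x : ℕ) :
    extOpt (Sum.elim v xs) x ∘ (sumFinSuccEquiv α k) = Sum.elim v (Fin.snoc xs x) := by
  funext i
  rcases i with a | i
  · rfl
  · refine Fin.lastCases ?_ (fun j => ?_) i
    · simp [sumFinSuccEquiv, extOpt]
    · simp [sumFinSuccEquiv, extOpt]

def toDNF : ∀ {k : ℕ}, Lpres.BoundedFormula α k → DNF (α ⊕ Fin k)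
  | _, .falsum => []
  | _, .equal t₁ t₂ => eqDNF (termLin t₁) (termLin t₂)
  | _, .rel .lt ts => ltDNF (termLin (ts 0)) (termLin (ts 1))
  | _, .imp φ ψ => ((toDNF φ).neg).or (toDNF ψ)
  | k, .all φ => ((((toDNF φ).neg).relabel (sumFinSuccEquiv α _)).exElim).neg

theorem toDNF_spec : ∀ {k : ℕ} (φ : Lpres.BoundedFormula α k) (v : α → ℕ) (xs : Fin k → ℕ),
    φ.Realize v xs ↔ (toDNF φ).eval (Sum.elim v xs) := by
  intro k φ
  induction φ with
  | falsum =>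
    intro v xs
    simp [toDNF, DNF.eval, BoundedFormula.Realize]
  | equal t₁ t₂ =>
    intro v xs
    rw [show (BoundedFormula.equal t₁ t₂).Realize v xs
      ↔ (t₁.realize (Sum.elim v xs) = t₂.realize (Sum.elim v xs)) from Iff.rfl]
    rw [show toDNF (.equal t₁ t₂) = eqDNF (termLin t₁) (termLin t₂) from rfl]
    rw [eqDNF_eval, ← termLin_spec, ← termLin_spec]
    exact_mod_cast Iff.rfl
  | rel R ts =>
    intro v xs
    cases R
    rw [show (BoundedFormula.rel PresRel.lt ts).Realize v xs
      ↔ RelMap (L := Lpres) (M := ℕ) (PresRel.lt : Lpres.Relations 2) (fun i => (ts i).realize (Sum.elim v xs)) from Iff.rfl]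
    rw [show toDNF (.rel PresRel.lt ts) = ltDNF (termLin (ts 0)) (termLin (ts 1)) from rfl]
    rw [ltDNF_eval, ← termLin_spec, ← termLin_spec]
    have : RelMap (L := Lpres) (M := ℕ) (PresRel.lt : Lpres.Relations 2) (fun i => (ts i).realize (Sum.elim v xs))
        ↔ (ts 0).realize (Sum.elim v xs) < (ts 1).realize (Sum.elim v xs) := Iff.rfl
    rw [this]
    exact_mod_cast Iff.rfl
  | imp φ ψ ih₁ ih₂ =>
    intro v xs
    rw [BoundedFormula.realize_imp]
    rw [show toDNF (φ.imp ψ) = ((toDNF φ).neg).or (toDNF ψ) from rfl]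
    rw [DNF.eval_or, DNF.eval_neg, ← ih₁, ← ih₂]
    tauto
  | all φ ih =>
    intro v xs
    rw [BoundedFormula.realize_all]
    rw [show toDNF φ.all = ((((toDNF φ).neg).relabel (sumFinSuccEquiv α _)).exElim).neg from rfl]
    rw [DNF.eval_neg, DNF.eval_exElim]
    rw [not_exists]
    apply forall_congr'
    intro x
    rw [DNF.eval_relabel, extOpt_comp_sumFinSuccEquiv, DNF.eval_neg, not_not, ← ih]

end PresQE
namespace PresQE

def atomsOf (d : DNF (Fin 1)) : List (Atom (Fin 1)) := d.flatMap id

def periodOf (d : DNF (Fin 1)) : ℕ :=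
  lcmList ((atomsOf d).map fun A =>
    match A with
    | .cong _ _ m => m + 1
    | .le _ _ => 1)

def threshOf (d : DNF (Fin 1)) : ℕ :=
  (atomsOf d).foldr (fun A t =>
    match A with
    | .le _ b => max (b.natAbs + 1) t
    | .cong _ _ _ => t) 0

theorem periodOf_pos (d : DNF (Fin 1)) : 0 < periodOf d := by
  apply lcmList_pos
  intro n hn
  obtain ⟨A, _, rfl⟩ := List.mem_map.mp hn
  cases A <;> simp

theorem cong_dvd_periodOf (d : DNF (Fin 1)) (a : Fin 1 → ℤ) (b : ℤ) (m : ℕ)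
    (h : Atom.cong a b m ∈ atomsOf d) : (m + 1) ∣ periodOf d := by
  apply dvd_lcmList
  exact List.mem_map_of_mem (f := fun A : Atom (Fin 1) =>
    match A with
    | .cong _ _ m => m + 1
    | .le _ _ => 1) h

theorem le_bound_le_foldr (L : List (Atom (Fin 1))) (a : Fin 1 → ℤ) (b : ℤ)
    (h : Atom.le a b ∈ L) :
    b.natAbs + 1 ≤ L.foldr (fun A t =>
      match A with
      | .le _ b => max (b.natAbs + 1) t
      | .cong _ _ _ => t) 0 := by
  induction L with
  | nil => simp at h
  | cons A rest ih =>
    rcases List.mem_cons.mp h with rfl | h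
    · simp only [List.foldr_cons]
      omega
    · have := ih h
      cases A with
      | le a' b' => simp only [List.foldr_cons]; omega
      | cong a' b' m' => simpa using this

theorem le_bound_le_threshOf (d : DNF (Fin 1)) (a : Fin 1 → ℤ) (b : ℤ)
    (h : Atom.le a b ∈ atomsOf d) : b.natAbs + 1 ≤ threshOf d :=
  le_bound_le_foldr _ a b h

theorem evalLin_const (a : Fin 1 → ℤ) (x : ℕ) :
    evalLin a (fun _ => x) = a 0 * (x : ℤ) := by
  simp [evalLin]

theorem atom_periodic (d : DNF (Fin 1)) (A : Atom (Fin 1)) (hA : A ∈ atomsOf d) (x : ℕ)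
    (hx : threshOf d ≤ x) :
    A.eval (fun _ => x) ↔ A.eval (fun _ => x + periodOf d) := by
  cases A with
  | le a b =>
    have hb := le_bound_le_threshOf d a b hA
    have hble : b ≤ (b.natAbs : ℤ) := Int.le_natAbs
    have hble' : -(b.natAbs : ℤ) ≤ b := by omega
    simp only [Atom.eval, evalLin_const]
    rcases Int.lt_trichotomy (a 0) 0 with h | h | h
    · -- both true
      have h1 : a 0 * (x : ℤ) ≤ -1 * (x : ℤ) :=
        mul_le_mul_of_nonneg_right (by omega) (by positivity)
      have h2 : a 0 * ((x + periodOf d : ℕ) : ℤ) ≤ -1 * ((x + periodOf d : ℕ) : ℤ) :=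
        mul_le_mul_of_nonneg_right (by omega) (by positivity)
      constructor <;> intro _ <;> [skip; skip] <;> push_cast at * <;> omega
    · simp [h]
    · -- both false
      have h1 : 1 * (x : ℤ) ≤ a 0 * (x : ℤ) :=
        mul_le_mul_of_nonneg_right (by omega) (by positivity)
      have h2 : 1 * ((x + periodOf d : ℕ) : ℤ) ≤ a 0 * ((x + periodOf d : ℕ) : ℤ) :=
        mul_le_mul_of_nonneg_right (by omega) (by positivity)
      constructor <;> intro _ <;> push_cast at * <;> omega
  | cong a b m =>
    have hdvd : ((m : ℤ) + 1) ∣ (periodOf d : ℤ) := by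
      exact_mod_cast Int.natCast_dvd_natCast.mpr (cong_dvd_periodOf d a b m hA)
    simp only [Atom.eval, evalLin_const]
    have hdiff : a 0 * ((x + periodOf d : ℕ) : ℤ) - b
        = (a 0 * (x : ℤ) - b) + a 0 * (periodOf d : ℤ) := by push_cast; ring
    rw [hdiff]
    constructor
    · intro h
      exact dvd_add h (hdvd.mul_left _)
    · intro h
      have := dvd_sub h (hdvd.mul_left (a 0))
      simpa using this

theorem dnf_periodic (d : DNF (Fin 1)) (x : ℕ) (hx : threshOf d ≤ x) :
    d.eval (fun _ => x) ↔ d.eval (fun _ => x + periodOf d) := by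
  unfold DNF.eval
  apply exists_congr
  intro l
  apply and_congr_right
  intro hl
  unfold Basic.eval
  apply forall_congr'
  intro A
  apply imp_congr_right
  intro hA
  exact atom_periodic d A (by simp only [atomsOf]; exact List.mem_flatMap.mpr ⟨l, hl, hA⟩) x hx

end PresQE
open PresQE in
/-- **Multiplication is not definable in Presburger arithmetic.** There is no first-order
formula `φ(x, y, z)` in the language `{+, <, 0, 1}` such that for all natural numbers
`a, b, c` we have `⟨ℕ, +, <, 0, 1⟩ ⊨ φ(a, b, c)` if and only if `a · b = c`. -/
theorem multiplication_not_presburger_definable :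
    ¬ ∃ φ : Lpres.Formula (Fin 3), ∀ a b c : ℕ, φ.Realize ![a, b, c] ↔ a * b = c := by
  classical
  rintro ⟨φ, hφ⟩
  have hspec := PresQE.toDNF_spec φ
  let e0 : (Fin 3 ⊕ Fin 0) ≃ Fin 3 := Equiv.sumEmpty _ _
  let d3 := (PresQE.toDNF φ).relabel e0
  have hd3 : ∀ v : Fin 3 → ℕ, d3.eval v ↔ v 0 * v 1 = v 2 := by
    intro v
    rw [PresQE.DNF.eval_relabel]
    have hcomp : v ∘ e0 = Sum.elim v (fun i : Fin 0 => i.elim0) := by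
      funext i
      rcases i with a | i
      · rfl
      · exact i.elim0
    rw [hcomp, ← hspec v (fun i : Fin 0 => i.elim0)]
    have hv : ![v 0, v 1, v 2] = v := by
      funext i
      fin_cases i <;> rfl
    have h := hφ (v 0) (v 1) (v 2)
    rw [hv] at h
    have hreal : Formula.Realize φ v ↔ BoundedFormula.Realize φ v (fun i : Fin 0 => i.elim0) := by
      unfold FirstOrder.Language.Formula.Realize
      exact iff_of_eq (congrArg (fun xs => BoundedFormula.Realize φ v xs)
        (funext fun i : Fin 0 => i.elim0))
    exact hreal.symm.trans h
  let diagBasic : PresQE.Basic (Fin 3) := [.le ![1,-1,0] 0, .le ![-1,1,0] 0]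
  let dd := d3.and [diagBasic]
  have e1 : ∀ v : Fin 3 → ℕ, PresQE.evalLin ![(1:ℤ),-1,0] v = (v 0 : ℤ) - v 1 := by
    intro v
    simp [PresQE.evalLin, Fin.sum_univ_three]
    ring
  have e2 : ∀ v : Fin 3 → ℕ, PresQE.evalLin ![(-1:ℤ),1,0] v = (v 1 : ℤ) - v 0 := by
    intro v
    simp [PresQE.evalLin, Fin.sum_univ_three]
    ring
  have hdd : ∀ v : Fin 3 → ℕ, dd.eval v ↔ (v 0 * v 1 = v 2 ∧ v 0 = v 1) := by
    intro v
    rw [PresQE.DNF.eval_and, hd3]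
    apply and_congr_right'
    constructor
    · rintro ⟨l, hl, h⟩
      simp only [List.mem_singleton] at hl
      subst hl
      have h1 := h _ (List.mem_cons_self)
      have h2 := h _ (List.mem_cons.mpr (Or.inr (List.mem_singleton.mpr rfl)))
      simp only [PresQE.Atom.eval, diagBasic] at h1 h2
      rw [e1 v] at h1
      rw [e2 v] at h2
      omega
    · intro h
      refine ⟨diagBasic, List.mem_singleton.mpr rfl, ?_⟩
      intro A hA
      rcases List.mem_cons.mp hA with rfl | hA
      · simp only [PresQE.Atom.eval]
        rw [e1 v]
        omega
      · rcases List.mem_cons.mp hA with rfl | hA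
        · simp only [PresQE.Atom.eval]
          rw [e2 v]
          omega
        · simp at hA
  let d2 := (dd.relabel (finSuccEquiv 2)).exElim
  have hcons : ∀ (k : ℕ) (w : Fin k → ℕ) (a : ℕ),
      PresQE.extOpt w a ∘ (finSuccEquiv k) = Fin.cons a w := by
    intro k w a
    funext i
    refine Fin.cases ?_ (fun j => ?_) i
    · simp only [Function.comp_apply, finSuccEquiv_zero, Fin.cons_zero]
      rfl
    · simp only [Function.comp_apply, finSuccEquiv_succ, Fin.cons_succ]
      rfl
  have hd2 : ∀ w : Fin 2 → ℕ, d2.eval w ↔ ∃ a : ℕ, dd.eval (Fin.cons a w) := by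
    intro w
    rw [PresQE.DNF.eval_exElim]
    apply exists_congr
    intro a
    rw [PresQE.DNF.eval_relabel, hcons]
  let d1 := (d2.relabel (finSuccEquiv 1)).exElim
  have hd1 : ∀ w : Fin 1 → ℕ, d1.eval w ↔ ∃ b a : ℕ, dd.eval (Fin.cons a (Fin.cons b w)) := by
    intro w
    rw [PresQE.DNF.eval_exElim]
    apply exists_congr
    intro b
    rw [PresQE.DNF.eval_relabel, hcons, hd2]
  have hsq : ∀ n : ℕ, d1.eval (fun _ => n) ↔ ∃ a : ℕ, a * a = n := by
    intro n
    rw [hd1]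
    constructor
    · rintro ⟨b, a, h⟩
      rw [hdd] at h
      obtain ⟨hmul, hdiag⟩ := h
      have hmul' : a * b = n := hmul
      have hdiag' : a = b := hdiag
      obtain rfl := hdiag'
      exact ⟨a, hmul'⟩
    · rintro ⟨a, ha⟩
      refine ⟨a, a, ?_⟩
      rw [hdd]
      exact ⟨ha, rfl⟩
  -- the set of squares is not eventually periodic
  have hP := PresQE.periodOf_pos d1
  set P := PresQE.periodOf d1 with hPdef
  set T := PresQE.threshOf d1 with hTdef
  set k := T + P + 1 with hkdef
  have hTle : T ≤ k * k := by
    have h1 : k ≤ k * k := Nat.le_mul_of_pos_left k (by omega)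
    omega
  have hn : d1.eval (fun _ => k * k) := (hsq _).mpr ⟨k, rfl⟩
  have hnp : d1.eval (fun _ => k * k + P) := (PresQE.dnf_periodic d1 (k * k) hTle).mp hn
  obtain ⟨m, hm⟩ := (hsq _).mp hnp
  have hkm : k < m := by
    by_contra hle
    push_neg at hle
    have h2 : m * m ≤ k * k := Nat.mul_le_mul hle hle
    have : 0 < P := hP
    linarith
  have key : k * k + 2 * k + 1 ≤ k * k + P := by
    calc k * k + 2 * k + 1 = (k + 1) * (k + 1) := by ring
      _ ≤ m * m := Nat.mul_le_mul (by omega) (by omega)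
      _ = k * k + P := hm
  have h2k : 2 * k + 1 ≤ P := by linarith
  omega
end

section
/- Every Presburger-definable subset of ℕ is eventually periodic: if A ⊆ ℕ is definable in ⟨ℕ, +, <, 0, 1⟩, then there exist N and p > 0 such that for all n ≥ N, n ∈ A iff n + p ∈ A. -/
open FirstOrder FirstOrder.Language FirstOrder.Language.Structure

/-- `A ⊆ ℕ` is definable (with parameters) in `⟨ℕ, +, <, 0, 1⟩`. -/
def PresburgerDefinable (A : Set ℕ) : Prop :=
  ∃ (k : ℕ) (φ : Lpres.BoundedFormula (Fin k) 1) (v : Fin k → ℕ),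
    ∀ n : ℕ, n ∈ A ↔ φ.Realize v ![n]


namespace PresProof

/-- An (integer) affine form in `m` natural-number variables. -/
structure Lin (m : ℕ) where
  c : ℤ
  a : Fin m → ℤ

namespace Lin
variable {m : ℕ}

def eval (L : Lin m) (x : Fin m → ℕ) : ℤ := L.c + ∑ i, L.a i * (x i : ℤ)

def const (c : ℤ) : Lin m := ⟨c, fun _ => 0⟩
def add (L M : Lin m) : Lin m := ⟨L.c + M.c, fun i => L.a i + M.a i⟩
def neg (L : Lin m) : Lin m := ⟨-L.c, fun i => -L.a i⟩
def sub (L M : Lin m) : Lin m := add L (neg M)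
def smul (k : ℤ) (L : Lin m) : Lin m := ⟨k * L.c, fun i => k * L.a i⟩
def addConst (L : Lin m) (r : ℤ) : Lin m := ⟨L.c + r, L.a⟩
def single (j : Fin m) : Lin m := ⟨0, fun i => if i = j then 1 else 0⟩

@[simp] lemma eval_const (c : ℤ) (x) : (const (m := m) c).eval x = c := by
  simp [eval, const]

@[simp] lemma eval_add (L M : Lin m) (x) : (add L M).eval x = L.eval x + M.eval x := by
  simp [eval, add, add_mul, Finset.sum_add_distrib]; ring

@[simp] lemma eval_neg (L : Lin m) (x) : (neg L).eval x = -L.eval x := by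
  simp [eval, neg, Finset.sum_add_distrib]; ring

@[simp] lemma eval_sub (L M : Lin m) (x) : (sub L M).eval x = L.eval x - M.eval x := by
  simp [sub]; ring

@[simp] lemma eval_smul (k : ℤ) (L : Lin m) (x) : (smul k L).eval x = k * L.eval x := by
  simp [eval, smul, Finset.mul_sum, mul_add, mul_assoc]

@[simp] lemma eval_addConst (L : Lin m) (r : ℤ) (x) : (addConst L r).eval x = L.eval x + r := by
  simp [eval, addConst]; ring

@[simp] lemma eval_single (j : Fin m) (x) : (single j).eval x = (x j : ℤ) := by
  simp [eval, single]

def init (L : Lin (m + 1)) : Lin m := ⟨L.c, fun i => L.a i.castSucc⟩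
def last (L : Lin (m + 1)) : ℤ := L.a (Fin.last m)

lemma eval_snoc (L : Lin (m + 1)) (x : Fin m → ℕ) (y : ℕ) :
    L.eval (Fin.snoc x y) = L.init.eval x + L.last * y := by
  simp [eval, init, last, Fin.sum_univ_castSucc]
  ring

end Lin



/-- A conjunctive cell: inequalities `eval ≤ 0` and divisibilities `d ∣ eval`. -/
structure Cell (m : ℕ) where
  ineqs : List (Lin m)
  divs : List (ℕ × Lin m)

namespace Cell
variable {m : ℕ}

def holds (c : Cell m) (x : Fin m → ℕ) : Prop :=
  (∀ L ∈ c.ineqs, L.eval x ≤ 0) ∧ ∀ p ∈ c.divs, ((p.1 : ℤ)) ∣ p.2.eval x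

/-- All divisors are positive. -/
def Pos (c : Cell m) : Prop := ∀ p ∈ c.divs, 0 < p.1

def append (c d : Cell m) : Cell m := ⟨c.ineqs ++ d.ineqs, c.divs ++ d.divs⟩

lemma holds_append {c d : Cell m} {x} : (c.append d).holds x ↔ c.holds x ∧ d.holds x := by
  simp only [holds, append, List.mem_append]
  constructor
  · rintro ⟨h1, h2⟩
    exact ⟨⟨fun L hL => h1 L (Or.inl hL), fun p hp => h2 p (Or.inl hp)⟩,
      ⟨fun L hL => h1 L (Or.inr hL), fun p hp => h2 p (Or.inr hp)⟩⟩
  · rintro ⟨⟨h1, h2⟩, ⟨h3, h4⟩⟩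
    exact ⟨fun L hL => hL.elim (h1 L) (h3 L), fun p hp => hp.elim (h2 p) (h4 p)⟩

/-- Replace divisibilities with divisor `0` (i.e. equalities) by two inequalities. -/
def norm (c : Cell m) : Cell m :=
  ⟨c.ineqs ++ (c.divs.filter (fun p => p.1 = 0)).flatMap (fun p => [p.2, p.2.neg]),
    c.divs.filter (fun p => p.1 ≠ 0)⟩

lemma norm_pos (c : Cell m) : c.norm.Pos := by
  intro p hp
  simp only [norm, List.mem_filter, decide_eq_true_eq] at hp
  omega

lemma holds_norm (c : Cell m) (x) : c.norm.holds x ↔ c.holds x := by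
  simp only [holds, norm, List.mem_append, List.mem_flatMap, List.mem_filter,
    decide_eq_true_eq, ne_eq]
  constructor
  · rintro ⟨h1, h2⟩
    refine ⟨fun L hL => h1 L (Or.inl hL), fun p hp => ?_⟩
    by_cases h0 : p.1 = 0
    · have ha := h1 p.2 (Or.inr ⟨p, ⟨hp, h0⟩, by simp⟩)
      have hb := h1 p.2.neg (Or.inr ⟨p, ⟨hp, h0⟩, by simp⟩)
      simp only [Lin.eval_neg] at hb
      rw [h0]
      simp only [Nat.cast_zero, Int.zero_dvd]
      omega
    · exact h2 p ⟨hp, h0⟩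
  · rintro ⟨h1, h2⟩
    constructor
    · rintro L (hL | ⟨p, ⟨hp, h0⟩, hL⟩)
      · exact h1 L hL
      · have := h2 p hp
        rw [h0] at this
        simp only [Nat.cast_zero, Int.zero_dvd] at this
        simp only [List.mem_cons, List.mem_singleton, List.not_mem_nil, or_false] at hL
        rcases hL with rfl | rfl <;> simp [this]
    · exact fun p hp => h2 p hp.1

end Cell

/-- A DNF formula: a finite union of cells. -/
abbrev DNF (m : ℕ) := List (Cell m)

namespace DNF
variable {m : ℕ}

def holds (D : DNF m) (x : Fin m → ℕ) : Prop := ∃ c ∈ D, c.holds x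

def inter (D E : DNF m) : DNF m := D.flatMap fun c => E.map fun d => c.append d

lemma holds_inter {D E : DNF m} {x} : (inter D E).holds x ↔ D.holds x ∧ E.holds x := by
  simp only [holds, inter, List.mem_flatMap, List.mem_map]
  constructor
  · rintro ⟨c', ⟨c, hc, d, hd, rfl⟩, h⟩
    rw [Cell.holds_append] at h
    exact ⟨⟨c, hc, h.1⟩, ⟨d, hd, h.2⟩⟩
  · rintro ⟨⟨c, hc, h1⟩, ⟨d, hd, h2⟩⟩
    exact ⟨c.append d, ⟨c, hc, d, hd, rfl⟩, Cell.holds_append.2 ⟨h1, h2⟩⟩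

def union (D E : DNF m) : DNF m := D ++ E

lemma holds_union {D E : DNF m} {x} : (union D E).holds x ↔ D.holds x ∨ E.holds x := by
  simp only [holds, union, List.mem_append]
  constructor
  · rintro ⟨c, hc | hc, h⟩
    · exact Or.inl ⟨c, hc, h⟩
    · exact Or.inr ⟨c, hc, h⟩
  · rintro (⟨c, hc, h⟩ | ⟨c, hc, h⟩)
    · exact ⟨c, Or.inl hc, h⟩
    · exact ⟨c, Or.inr hc, h⟩

end DNF

variable {m : ℕ}

lemma dvd_sub_iff_emod_eq {d t s : ℤ} (hs0 : 0 ≤ s) (hsd : s < d) :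
    d ∣ t - s ↔ t % d = s := by
  constructor
  · rintro ⟨w, hw⟩
    have : t = d * w + s := by omega
    rw [this, add_comm, Int.add_mul_emod_self_left]
    exact Int.emod_eq_of_lt hs0 hsd
  · intro h
    have := Int.emod_add_mul_ediv t d
    exact ⟨t / d, by omega⟩

lemma not_dvd_iff {d : ℕ} (hd : 0 < d) (t : ℤ) :
    ¬ ((d : ℤ) ∣ t) ↔ ∃ r : ℕ, r ∈ List.range (d - 1) ∧ (d : ℤ) ∣ t - ((r : ℤ) + 1) := by
  have hd' : (0 : ℤ) < d := by exact_mod_cast hd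
  have h1 : 0 ≤ t % d := Int.emod_nonneg t (by omega)
  have h2 : t % d < d := Int.emod_lt_of_pos t hd'
  have hdvd : (d : ℤ) ∣ t ↔ t % d = 0 := by
    constructor
    · exact fun h => Int.emod_eq_zero_of_dvd h
    · exact fun h => Int.dvd_of_emod_eq_zero h
  constructor
  · intro h
    rw [hdvd] at h
    refine ⟨(t % d).toNat - 1, by rw [List.mem_range]; omega, ?_⟩
    rw [dvd_sub_iff_emod_eq (by omega) (by omega)]
    omega
  · rintro ⟨r, hr, hrdvd⟩ hdt
    rw [List.mem_range] at hr
    rw [dvd_sub_iff_emod_eq (by omega) (by omega)] at hrdvd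
    rw [hdvd] at hdt
    omega

def negIneqCell (L : Lin m) : Cell m := ⟨[(Lin.neg L).addConst 1], []⟩

lemma holds_negIneqCell (L : Lin m) (x) : (negIneqCell L).holds x ↔ ¬ (L.eval x ≤ 0) := by
  simp [Cell.holds, negIneqCell]

def negDivDNF (p : ℕ × Lin m) : DNF m :=
  if p.1 = 0 then [⟨[(Lin.neg p.2).addConst 1], []⟩, ⟨[p.2.addConst 1], []⟩]
  else (List.range (p.1 - 1)).map fun r : ℕ => ⟨[], [(p.1, p.2.addConst (-((r : ℤ) + 1)))]⟩

lemma holds_negDivDNF (p : ℕ × Lin m) (x) :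
    (negDivDNF p).holds x ↔ ¬ ((p.1 : ℤ) ∣ p.2.eval x) := by
  rcases p with ⟨d, L⟩
  by_cases h0 : d = 0
  · subst h0
    simp [negDivDNF, DNF.holds, Cell.holds]
    omega
  · have hd : 0 < d := Nat.pos_of_ne_zero h0
    rw [not_dvd_iff hd]
    simp only [negDivDNF, if_neg h0, DNF.holds, List.mem_map]
    constructor
    · rintro ⟨c, ⟨r, hr, rfl⟩, hc⟩
      refine ⟨r, hr, ?_⟩
      have := hc.2 (d, L.addConst (-((r : ℤ) + 1))) (by simp)
      simpa [sub_eq_add_neg] using this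
    · rintro ⟨r, hr, hdvd⟩
      refine ⟨_, ⟨r, hr, rfl⟩, ⟨by simp, ?_⟩⟩
      rintro q hq
      simp only [List.mem_singleton] at hq
      subst hq
      simpa [sub_eq_add_neg] using hdvd

def complCell (c : Cell m) : DNF m :=
  c.ineqs.map negIneqCell ++ c.divs.flatMap negDivDNF

lemma holds_complCell (c : Cell m) (x) : (complCell c).holds x ↔ ¬ c.holds x := by
  simp only [Cell.holds, not_and_or, not_forall]
  constructor
  · rintro ⟨e, he, hhold⟩
    rw [complCell, List.mem_append] at he
    rcases he with he | he
    · rw [List.mem_map] at he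
      obtain ⟨L, hL, rfl⟩ := he
      exact Or.inl ⟨L, ⟨hL, (holds_negIneqCell L x).1 hhold⟩⟩
    · rw [List.mem_flatMap] at he
      obtain ⟨p, hp, hpe⟩ := he
      exact Or.inr ⟨p, ⟨hp, (holds_negDivDNF p x).1 ⟨e, hpe, hhold⟩⟩⟩
  · rintro (⟨L, hL, hne⟩ | ⟨p, hp, hne⟩)
    · refine ⟨negIneqCell L, ?_, (holds_negIneqCell L x).2 hne⟩
      rw [complCell, List.mem_append]
      exact Or.inl (List.mem_map.2 ⟨L, hL, rfl⟩)
    · obtain ⟨e, he, hh⟩ := (holds_negDivDNF p x).2 hne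
      refine ⟨e, ?_, hh⟩
      rw [complCell, List.mem_append]
      exact Or.inr (List.mem_flatMap.2 ⟨p, hp, he⟩)

def complDNF : DNF m → DNF m
  | [] => [⟨[], []⟩]
  | c :: D => DNF.inter (complCell c) (complDNF D)

lemma holds_complDNF (D : DNF m) (x) : (complDNF D).holds x ↔ ¬ D.holds x := by
  induction D with
  | nil => simp [complDNF, DNF.holds, Cell.holds]
  | cons c D ih =>
    rw [complDNF, DNF.holds_inter, holds_complCell, ih]
    simp only [DNF.holds, List.mem_cons]
    constructor
    · rintro ⟨h1, h2⟩ ⟨e, he | he, hh⟩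
      · exact h1 (he ▸ hh)
      · exact h2 ⟨e, he, hh⟩
    · intro h
      exact ⟨fun hc => h ⟨c, Or.inl rfl, hc⟩, fun ⟨e, he, hh⟩ => h ⟨e, Or.inr he, hh⟩⟩


variable {m : ℕ}

/-! ### Arithmetic helpers -/

lemma le_iff_scaled_neg {k t M l : ℤ} (y : ℤ) (hk : 0 < k) (hM : k * (-l) = M) :
    t + l * y ≤ 0 ↔ k * t ≤ M * y := by
  subst hM
  constructor
  · intro h
    nlinarith [mul_le_mul_of_nonneg_left h hk.le]
  · intro h
    by_contra hcon
    push_neg at hcon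
    nlinarith [mul_pos hk hcon]

lemma le_iff_scaled_pos {k t M l : ℤ} (y : ℤ) (hk : 0 < k) (hM : k * l = M) :
    t + l * y ≤ 0 ↔ M * y ≤ -(k * t) := by
  subst hM
  constructor
  · intro h
    nlinarith [mul_le_mul_of_nonneg_left h hk.le]
  · intro h
    by_contra hcon
    push_neg at hcon
    nlinarith [mul_pos hk hcon]

lemma dvd_iff_scaled {k d t : ℤ} (hk : k ≠ 0) : d ∣ t ↔ k * d ∣ k * t :=
  (mul_dvd_mul_iff_left hk).symm

lemma pos_of_mul_pos_right' {k a : ℤ} (h : 0 < k * a) (ha : 0 < a) : 0 < k := by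
  rcases mul_pos_iff.1 h with ⟨h1, _⟩ | ⟨_, h2⟩
  · exact h1
  · omega

/-! ### Quantifier helpers for `filterMap` -/

lemma forall_filterMap {α β : Type*} (l : List α) (f : α → Option β) (P : β → Prop) :
    (∀ b ∈ l.filterMap f, P b) ↔ ∀ a ∈ l, ∀ b, f a = some b → P b := by
  constructor
  · intro h a ha b hb
    exact h b (List.mem_filterMap.2 ⟨a, ha, hb⟩)
  · intro h b hb
    obtain ⟨a, ha, hf⟩ := List.mem_filterMap.1 hb
    exact h a ha b hf

lemma forall_if_some {β : Type*} {cond : Prop} [Decidable cond] {g : β} {P : β → Prop} :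
    (∀ b, (if cond then some g else none) = some b → P b) ↔ (cond → P g) := by
  split <;> simp_all

lemma forall_if_some' {β : Type*} {cond : Prop} [Decidable cond] {g : β} {P : β → Prop} :
    (∀ b, (if cond then none else some g) = some b → P b) ↔ (¬ cond → P g) := by
  split <;> simp_all

/-! ### The product of absolute values of nonzero entries -/

def prodAbs : List ℤ → ℤ
  | [] => 1
  | a :: l => if a = 0 then prodAbs l else (a.natAbs : ℤ) * prodAbs l

lemma prodAbs_pos (l : List ℤ) : 0 < prodAbs l := by
  induction l with
  | nil => norm_num [prodAbs]
  | cons a l ih =>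
    rw [prodAbs]
    split
    · exact ih
    · have h : 0 < (a.natAbs : ℤ) := by omega
      positivity

lemma natAbs_dvd_prodAbs {a : ℤ} {l : List ℤ} (ha : a ∈ l) (h0 : a ≠ 0) :
    (a.natAbs : ℤ) ∣ prodAbs l := by
  induction l with
  | nil => simp at ha
  | cons b l ih =>
    rw [List.mem_cons] at ha
    rw [prodAbs]
    rcases ha with rfl | ha
    · rw [if_neg h0]; exact Dvd.intro _ rfl
    · split
      · exact ih ha
      · exact (ih ha).mul_left _

/-! ### Data extracted from a cell in `m + 1` variables -/

def coeffList (c : Cell (m + 1)) : List ℤ :=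
  c.ineqs.map Lin.last ++ c.divs.map (fun p => p.2.last)

def Mc (c : Cell (m + 1)) : ℤ := prodAbs (coeffList c)

lemma Mc_pos (c : Cell (m + 1)) : 0 < Mc c := prodAbs_pos _

lemma ineq_last_dvd {c : Cell (m + 1)} {L : Lin (m + 1)} (hL : L ∈ c.ineqs)
    (h0 : L.last ≠ 0) : (L.last.natAbs : ℤ) ∣ Mc c :=
  natAbs_dvd_prodAbs (by rw [coeffList, List.mem_append]; exact Or.inl (List.mem_map_of_mem hL)) h0

lemma div_last_dvd {c : Cell (m + 1)} {p : ℕ × Lin (m + 1)} (hp : p ∈ c.divs)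
    (h0 : p.2.last ≠ 0) : (p.2.last.natAbs : ℤ) ∣ Mc c :=
  natAbs_dvd_prodAbs (by rw [coeffList, List.mem_append]; exact Or.inr (List.mem_map_of_mem hp)) h0

/-- Lower bounds: terms `b` with meaning `b ≤ z`. -/
def lows (c : Cell (m + 1)) : List (Lin m) :=
  Lin.const 0 :: c.ineqs.filterMap (fun L =>
    if L.last < 0 then some (Lin.smul (Mc c / (-L.last)) L.init) else none)

/-- Upper bounds: terms `U` with meaning `z ≤ U`. -/
def ups (c : Cell (m + 1)) : List (Lin m) :=
  c.ineqs.filterMap (fun L =>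
    if 0 < L.last then some (Lin.neg (Lin.smul (Mc c / L.last) L.init)) else none)

def pureIneqs (c : Cell (m + 1)) : List (Lin m) :=
  c.ineqs.filterMap (fun L => if L.last = 0 then some L.init else none)

def pureDivs (c : Cell (m + 1)) : List (ℕ × Lin m) :=
  c.divs.filterMap (fun p => if p.2.last = 0 then some (p.1, p.2.init) else none)

/-- Divisibilities on `z`: pairs `(d, V)` with meaning `d ∣ z + V`. -/
def zdivs (c : Cell (m + 1)) : List (ℕ × Lin m) :=
  ((Mc c).toNat, Lin.const 0) :: c.divs.filterMap (fun p =>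
    if p.2.last = 0 then none else
      some (((Mc c / (p.2.last.natAbs : ℤ)) * p.1).toNat,
        if 0 < p.2.last then Lin.smul (Mc c / p.2.last) p.2.init
        else Lin.neg (Lin.smul (Mc c / (-p.2.last)) p.2.init)))

/-- Bounds and divisibility constraints on `z`. -/
def Zpred (c : Cell (m + 1)) (x : Fin m → ℕ) (z : ℤ) : Prop :=
  (∀ b ∈ lows c, b.eval x ≤ z) ∧ (∀ U ∈ ups c, z ≤ U.eval x) ∧
    ∀ p ∈ zdivs c, (p.1 : ℤ) ∣ z + p.2.eval x

lemma holds_snoc_iff (c : Cell (m + 1)) (x : Fin m → ℕ) (y : ℕ) :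
    c.holds (Fin.snoc x y) ↔
      ((∀ L ∈ pureIneqs c, L.eval x ≤ 0) ∧ (∀ p ∈ pureDivs c, (p.1 : ℤ) ∣ p.2.eval x)) ∧
        Zpred c x (Mc c * y) := by
  have hM := Mc_pos c
  -- facts about individual inequality atoms
  have ineqNeg : ∀ L ∈ c.ineqs, L.last < 0 →
      (L.eval (Fin.snoc x y) ≤ 0 ↔
        (Lin.smul (Mc c / (-L.last)) L.init).eval x ≤ Mc c * y) := by
    intro L hL hneg
    have hdvd : (-L.last) ∣ Mc c := by
      have h := ineq_last_dvd hL (by omega)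
      have he : (L.last.natAbs : ℤ) = -L.last := by omega
      rwa [he] at h
    have hmul : Mc c / (-L.last) * (-L.last) = Mc c := Int.ediv_mul_cancel hdvd
    have hk : 0 < Mc c / (-L.last) :=
      pos_of_mul_pos_right' (by rw [hmul]; exact hM) (by omega)
    rw [Lin.eval_snoc, Lin.eval_smul]
    exact le_iff_scaled_neg _ hk hmul
  have ineqPos : ∀ L ∈ c.ineqs, 0 < L.last →
      (L.eval (Fin.snoc x y) ≤ 0 ↔
        Mc c * y ≤ (Lin.neg (Lin.smul (Mc c / L.last) L.init)).eval x) := by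
    intro L hL hpos
    have hdvd : L.last ∣ Mc c := by
      have h := ineq_last_dvd hL (by omega)
      have he : (L.last.natAbs : ℤ) = L.last := by omega
      rwa [he] at h
    have hmul : Mc c / L.last * L.last = Mc c := Int.ediv_mul_cancel hdvd
    have hk : 0 < Mc c / L.last :=
      pos_of_mul_pos_right' (by rw [hmul]; exact hM) hpos
    rw [Lin.eval_snoc, Lin.eval_neg, Lin.eval_smul]
    exact le_iff_scaled_pos _ hk hmul
  have ineqZero : ∀ L : Lin (m + 1), L.last = 0 →
      (L.eval (Fin.snoc x y) ≤ 0 ↔ L.init.eval x ≤ 0) := by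
    intro L h0
    rw [Lin.eval_snoc, h0]
    simp
  have divZero : ∀ p : ℕ × Lin (m + 1), p.2.last = 0 →
      (((p.1 : ℤ)) ∣ p.2.eval (Fin.snoc x y) ↔ (p.1 : ℤ) ∣ p.2.init.eval x) := by
    intro p h0
    rw [Lin.eval_snoc, h0]
    simp
  have divNZ : ∀ p ∈ c.divs, p.2.last ≠ 0 →
      (((p.1 : ℤ)) ∣ p.2.eval (Fin.snoc x y) ↔
        (((((Mc c / (p.2.last.natAbs : ℤ)) * p.1).toNat : ℕ) : ℤ)) ∣ Mc c * y +
          (if 0 < p.2.last then Lin.smul (Mc c / p.2.last) p.2.init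
            else Lin.neg (Lin.smul (Mc c / (-p.2.last)) p.2.init)).eval x) := by
    intro p hp h0
    have hdvd : ((p.2.last.natAbs : ℤ)) ∣ Mc c := div_last_dvd hp h0
    set k := Mc c / (p.2.last.natAbs : ℤ) with hkdef
    have hmul : k * (p.2.last.natAbs : ℤ) = Mc c := Int.ediv_mul_cancel hdvd
    have hk : 0 < k := pos_of_mul_pos_right' (by rw [hmul]; exact hM) (by omega)
    have htn : (((k * p.1).toNat : ℤ)) = k * p.1 :=
      Int.toNat_of_nonneg (by positivity)
    rw [Lin.eval_snoc, htn]
    rcases lt_or_gt_of_ne h0 with hneg | hpos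
    · rw [if_neg (by omega), Lin.eval_neg, Lin.eval_smul]
      have he : (p.2.last.natAbs : ℤ) = -p.2.last := by omega
      rw [he] at hmul hkdef
      rw [← hkdef, dvd_iff_scaled (show k ≠ 0 by omega)]
      constructor
      · intro h
        have h2 : k * (p.1 : ℤ) ∣ -(k * (p.2.init.eval x + p.2.last * y)) := h.neg_right
        have : -(k * (p.2.init.eval x + p.2.last * y)) =
            Mc c * y + -(k * p.2.init.eval x) := by
          rw [← hmul]; ring
        rwa [this] at h2
      · intro h
        have h2 := h.neg_right
        have : -(Mc c * y + -(k * p.2.init.eval x)) =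
            k * (p.2.init.eval x + p.2.last * y) := by
          rw [← hmul]; ring
        rwa [this] at h2
    · rw [if_pos hpos, Lin.eval_smul]
      have he : (p.2.last.natAbs : ℤ) = p.2.last := by omega
      rw [he] at hmul hkdef
      rw [← hkdef, dvd_iff_scaled (show k ≠ 0 by omega)]
      have : k * (p.2.init.eval x + p.2.last * y) =
          Mc c * y + k * p.2.init.eval x := by
        rw [← hmul]; ring
      rw [this]
      
  -- now rewrite all the filterMap quantifiers
  rw [Cell.holds, Zpred, pureIneqs, pureDivs, lows, ups, zdivs]
  simp only [List.forall_mem_cons, forall_filterMap, forall_if_some, forall_if_some',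
    Lin.eval_const, Lin.eval_neg, Lin.eval_smul]
  constructor
  · rintro ⟨hin, hdv⟩
    refine ⟨⟨fun L hL h0 => (ineqZero L h0).1 (hin L hL),
             fun p hp h0 => (divZero p h0).1 (hdv p hp)⟩,
      ⟨by positivity,
       fun L hL hneg => by simpa using (ineqNeg L hL hneg).1 (hin L hL)⟩,
      fun L hL hpos => by simpa using (ineqPos L hL hpos).1 (hin L hL),
      by rw [Int.toNat_of_nonneg hM.le, add_zero]; exact Dvd.intro _ rfl,
      fun p hp h0 => (divNZ p hp h0).1 (hdv p hp)⟩
  · rintro ⟨⟨hz, hdz⟩, ⟨h0, hlo⟩, hup, ⟨hMdvd, hnz⟩⟩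
    constructor
    · intro L hL
      rcases lt_trichotomy L.last 0 with h | h | h
      · exact (ineqNeg L hL h).2 (by simpa using hlo L hL h)
      · exact (ineqZero L h).2 (hz L hL h)
      · exact (ineqPos L hL h).2 (by simpa using hup L hL h)
    · intro p hp
      by_cases h : p.2.last = 0
      · exact (divZero p h).2 (hdz p hp h)
      · exact (divNZ p hp h).2 (hnz p hp h)


variable {m : ℕ}

lemma exists_max_eval (l : List (Lin m)) (hl : l ≠ []) (x : Fin m → ℕ) :
    ∃ b ∈ l, ∀ b' ∈ l, b'.eval x ≤ b.eval x := by
  induction l with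
  | nil => exact absurd rfl hl
  | cons a l ih =>
    rcases eq_or_ne l [] with rfl | hne
    · exact ⟨a, List.mem_cons_self, by simp⟩
    · obtain ⟨b, hb, hmax⟩ := ih hne
      rcases le_total (a.eval x) (b.eval x) with h | h
      · refine ⟨b, List.mem_cons_of_mem _ hb, ?_⟩
        intro b' hb'
        rcases List.mem_cons.1 hb' with rfl | hb'
        · exact h
        · exact hmax b' hb'
      · refine ⟨a, List.mem_cons_self, ?_⟩
        intro b' hb'
        rcases List.mem_cons.1 hb' with rfl | hb'
        · exact le_rfl
        · exact (hmax b' hb').trans h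

lemma emod_le_self {a D : ℤ} (ha : 0 ≤ a) (hD : 0 < D) : a % D ≤ a := by
  have h1 := Int.emod_add_mul_ediv a D
  have h2 : 0 ≤ a / D := Int.ediv_nonneg ha hD.le
  nlinarith [mul_nonneg hD.le h2]

def Dof (c : Cell (m + 1)) : ℕ := ((zdivs c).map Prod.fst).prod

lemma zdivs_pos {c : Cell (m + 1)} (hc : c.Pos) : ∀ p ∈ zdivs c, 0 < p.1 := by
  intro p hp
  rw [zdivs, List.mem_cons] at hp
  rcases hp with rfl | hp
  · have := Mc_pos c; omega
  · rw [List.mem_filterMap] at hp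
    obtain ⟨q, hq, hsome⟩ := hp
    by_cases h0 : q.2.last = 0
    · rw [if_pos h0] at hsome; exact absurd hsome (by simp)
    · rw [if_neg h0] at hsome
      obtain rfl := Option.some.inj hsome
      have hdvd := div_last_dvd hq h0
      have hmul : Mc c / (q.2.last.natAbs : ℤ) * (q.2.last.natAbs : ℤ) = Mc c :=
        Int.ediv_mul_cancel hdvd
      have hk : 0 < Mc c / (q.2.last.natAbs : ℤ) :=
        pos_of_mul_pos_right' (by rw [hmul]; exact Mc_pos c) (by omega)
      have hd := hc q hq
      simp only []
      have : (1 : ℤ) ≤ Mc c / (q.2.last.natAbs : ℤ) * (q.1 : ℤ) := by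
        have : (1 : ℤ) ≤ (q.1 : ℤ) := by exact_mod_cast hd
        nlinarith
      omega

lemma Dof_pos {c : Cell (m + 1)} (hc : c.Pos) : 0 < Dof c := by
  rw [Dof]
  apply List.prod_pos
  intro a ha
  rw [List.mem_map] at ha
  obtain ⟨p, hp, rfl⟩ := ha
  exact zdivs_pos hc p hp

lemma zdiv_dvd_Dof {c : Cell (m + 1)} {p : ℕ × Lin m} (hp : p ∈ zdivs c) : p.1 ∣ Dof c :=
  List.dvd_prod (List.mem_map_of_mem hp)

lemma zpred_shift (c : Cell (m + 1)) (hc : c.Pos) (x : Fin m → ℕ) :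
    (∃ z : ℤ, Zpred c x z) ↔
      ∃ b ∈ lows c, ∃ r : ℕ, r < Dof c ∧ Zpred c x (b.eval x + (r : ℤ)) := by
  constructor
  · rintro ⟨z, hlo, hup, hdv⟩
    obtain ⟨b, hb, hmax⟩ := exists_max_eval (lows c) (by rw [lows]; simp) x
    have hD : (0 : ℤ) < (Dof c : ℤ) := by exact_mod_cast Dof_pos hc
    have hzb : b.eval x ≤ z := hlo b hb
    set D : ℤ := (Dof c : ℤ) with hDdef
    set s : ℤ := (z - b.eval x) % D with hsdef
    have hs0 : 0 ≤ s := Int.emod_nonneg _ (by omega)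
    have hsD : s < D := Int.emod_lt_of_pos _ hD
    refine ⟨b, hb, s.toNat, by omega, ?_, ?_, ?_⟩
    · intro b' hb'
      have := hmax b' hb'
      omega
    · intro U hU
      have h1 : s ≤ z - b.eval x := emod_le_self (by omega) hD
      have := hup U hU
      omega
    · intro p hp
      have h1 := hdv p hp
      have h2 : D ∣ (z - b.eval x) - s := Int.dvd_self_sub_of_emod_eq rfl
      have h3 : (p.1 : ℤ) ∣ D := by
        rw [hDdef]
        exact_mod_cast zdiv_dvd_Dof hp
      have h4 : (p.1 : ℤ) ∣ (z - b.eval x) - s := h3.trans h2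
      have : b.eval x + (s.toNat : ℤ) + p.2.eval x =
          (z + p.2.eval x) - ((z - b.eval x) - s) := by omega
      rw [this]
      exact Int.dvd_sub h1 h4
  · rintro ⟨b, hb, r, hr, hZ⟩
    exact ⟨b.eval x + (r : ℤ), hZ⟩

lemma exists_y_iff (c : Cell (m + 1)) (x : Fin m → ℕ) :
    (∃ y : ℕ, Zpred c x (Mc c * y)) ↔ ∃ z : ℤ, Zpred c x z := by
  constructor
  · rintro ⟨y, hy⟩
    exact ⟨Mc c * y, hy⟩
  · rintro ⟨z, hz⟩
    have h0 : (0 : ℤ) ≤ z := by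
      have := hz.1 (Lin.const 0) (by rw [lows]; exact List.mem_cons_self)
      simpa using this
    have hMdvd : Mc c ∣ z := by
      have := hz.2.2 ((Mc c).toNat, Lin.const 0) (by rw [zdivs]; exact List.mem_cons_self)
      simp only [Lin.eval_const, add_zero] at this
      rwa [Int.toNat_of_nonneg (Mc_pos c).le] at this
    obtain ⟨w, rfl⟩ := hMdvd
    have hM := Mc_pos c
    have hw : 0 ≤ w := by nlinarith
    refine ⟨w.toNat, ?_⟩
    rwa [Int.toNat_of_nonneg hw]

def subCell (c : Cell (m + 1)) (b : Lin m) (r : ℕ) : Cell m :=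
  ⟨pureIneqs c ++ (lows c).map (fun b' => (Lin.sub b' b).addConst (-(r : ℤ))) ++
      (ups c).map (fun U => (Lin.sub b U).addConst (r : ℤ)),
    pureDivs c ++ (zdivs c).map (fun p => (p.1, (Lin.add b p.2).addConst (r : ℤ)))⟩

lemma holds_subCell (c : Cell (m + 1)) (b : Lin m) (r : ℕ) (x : Fin m → ℕ) :
    (subCell c b r).holds x ↔
      ((∀ L ∈ pureIneqs c, L.eval x ≤ 0) ∧ (∀ p ∈ pureDivs c, (p.1 : ℤ) ∣ p.2.eval x)) ∧
        Zpred c x (b.eval x + (r : ℤ)) := by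
  rw [Cell.holds, subCell, Zpred]
  simp only [List.mem_append, List.mem_map]
  constructor
  · rintro ⟨hin, hdv⟩
    refine ⟨⟨fun L hL => hin L (Or.inl (Or.inl hL)),
             fun p hp => hdv p (Or.inl hp)⟩, ?_, ?_, ?_⟩
    · intro b' hb'
      have := hin _ (Or.inl (Or.inr ⟨b', hb', rfl⟩))
      simp only [Lin.eval_addConst, Lin.eval_sub] at this
      omega
    · intro U hU
      have := hin _ (Or.inr ⟨U, hU, rfl⟩)
      simp only [Lin.eval_addConst, Lin.eval_sub] at this
      omega
    · intro p hp
      have := hdv _ (Or.inr ⟨p, hp, rfl⟩)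
      simp only [Lin.eval_addConst, Lin.eval_add] at this
      have he : b.eval x + p.2.eval x + (r : ℤ) = b.eval x + (r : ℤ) + p.2.eval x := by ring
      rwa [he] at this
  · rintro ⟨⟨hpi, hpd⟩, hlo, hup, hdv⟩
    constructor
    · rintro L (⟨hL | ⟨b', hb', rfl⟩⟩ | ⟨U, hU, rfl⟩)
      · exact hpi L hL
      · have := hlo b' hb'
        simp only [Lin.eval_addConst, Lin.eval_sub]
        omega
      · have := hup U hU
        simp only [Lin.eval_addConst, Lin.eval_sub]
        omega
    · rintro p (hp | ⟨q, hq, rfl⟩)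
      · exact hpd p hp
      · have := hdv q hq
        simp only [Lin.eval_addConst, Lin.eval_add]
        have he : b.eval x + q.2.eval x + (r : ℤ) = b.eval x + (r : ℤ) + q.2.eval x := by ring
        rwa [he]

def exCell (c : Cell (m + 1)) : DNF m :=
  (lows c).flatMap (fun b => (List.range (Dof c)).map (fun r => subCell c b r))

lemma holds_exCell (c : Cell (m + 1)) (hc : c.Pos) (x : Fin m → ℕ) :
    (exCell c).holds x ↔ ∃ y : ℕ, c.holds (Fin.snoc x y) := by
  have key : (∃ y : ℕ, c.holds (Fin.snoc x y)) ↔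
      ((∀ L ∈ pureIneqs c, L.eval x ≤ 0) ∧ (∀ p ∈ pureDivs c, (p.1 : ℤ) ∣ p.2.eval x)) ∧
        ∃ b ∈ lows c, ∃ r : ℕ, r < Dof c ∧ Zpred c x (b.eval x + (r : ℤ)) := by
    rw [← zpred_shift c hc x, ← exists_y_iff c x]
    constructor
    · rintro ⟨y, hy⟩
      rw [holds_snoc_iff] at hy
      exact ⟨hy.1, y, hy.2⟩
    · rintro ⟨hpure, y, hy⟩
      exact ⟨y, (holds_snoc_iff c x y).2 ⟨hpure, hy⟩⟩
  rw [key]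
  rw [DNF.holds, exCell]
  simp only [List.mem_flatMap, List.mem_map, List.mem_range]
  constructor
  · rintro ⟨e, ⟨b, hb, r, hr, rfl⟩, he⟩
    rw [holds_subCell] at he
    exact ⟨he.1, b, hb, r, hr, he.2⟩
  · rintro ⟨hpure, b, hb, r, hr, hZ⟩
    exact ⟨subCell c b r, ⟨b, hb, r, hr, rfl⟩, (holds_subCell c b r x).2 ⟨hpure, hZ⟩⟩

def exDNF (D : DNF (m + 1)) : DNF m := D.flatMap (fun c => exCell c.norm)

lemma holds_exDNF (D : DNF (m + 1)) (x : Fin m → ℕ) :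
    (exDNF D).holds x ↔ ∃ y : ℕ, D.holds (Fin.snoc x y) := by
  rw [DNF.holds, exDNF]
  simp only [List.mem_flatMap]
  constructor
  · rintro ⟨e, ⟨c, hc, he⟩, hh⟩
    have := (holds_exCell c.norm (Cell.norm_pos c) x).1 ⟨e, he, hh⟩
    obtain ⟨y, hy⟩ := this
    exact ⟨y, c, hc, (Cell.holds_norm c _).1 hy⟩
  · rintro ⟨y, c, hc, hh⟩
    have := (holds_exCell c.norm (Cell.norm_pos c) x).2 ⟨y, (Cell.holds_norm c _).2 hh⟩
    obtain ⟨e, he, hh'⟩ := this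
    exact ⟨e, ⟨c, hc, he⟩, hh'⟩


open FirstOrder FirstOrder.Language

lemma term_lin {k l : ℕ} (v : Fin k → ℕ) (t : Lpres.Term (Fin k ⊕ Fin l)) :
    ∃ L : Lin l, ∀ x : Fin l → ℕ, ((t.realize (Sum.elim v x) : ℕ) : ℤ) = L.eval x := by
  induction t with
  | var i =>
    cases i with
    | inl i => exact ⟨Lin.const (v i), fun x => by simp [Term.realize]⟩
    | inr j => exact ⟨Lin.single j, fun x => by simp [Term.realize]⟩
  | func f ts ih =>
    cases f with
    | zero =>
      refine ⟨Lin.const 0, fun x => ?_⟩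
      have : Term.realize (Sum.elim v x) (Term.func PresFunc.zero ts) = 0 := rfl
      rw [this]
      simp
    | one =>
      refine ⟨Lin.const 1, fun x => ?_⟩
      have : Term.realize (Sum.elim v x) (Term.func PresFunc.one ts) = 1 := rfl
      rw [this]
      simp
    | add =>
      obtain ⟨L0, h0⟩ := ih 0
      obtain ⟨L1, h1⟩ := ih 1
      refine ⟨Lin.add L0 L1, fun x => ?_⟩
      have : Term.realize (Sum.elim v x) (Term.func PresFunc.add ts) =
          Term.realize (Sum.elim v x) (ts 0) + Term.realize (Sum.elim v x) (ts 1) := rfl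
      rw [this]
      push_cast
      rw [h0 x, h1 x, Lin.eval_add]

/-- `S` is recognized by some DNF. -/
def Defd {l : ℕ} (S : (Fin l → ℕ) → Prop) : Prop :=
  ∃ D : DNF l, ∀ x, S x ↔ D.holds x

lemma defd_formula {k : ℕ} (v : Fin k → ℕ) {l : ℕ} (φ : Lpres.BoundedFormula (Fin k) l) :
    Defd (fun x : Fin l → ℕ => φ.Realize v x) := by
  induction φ with
  | falsum => exact ⟨[], fun x => by simp [DNF.holds, BoundedFormula.Realize]⟩
  | equal t1 t2 =>
    obtain ⟨L1, h1⟩ := term_lin v t1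
    obtain ⟨L2, h2⟩ := term_lin v t2
    refine ⟨[⟨[Lin.sub L1 L2, Lin.sub L2 L1], []⟩], fun x => ?_⟩
    dsimp only
    have : (BoundedFormula.equal t1 t2).Realize v x ↔
        Term.realize (Sum.elim v x) t1 = Term.realize (Sum.elim v x) t2 := Iff.rfl
    rw [this]
    simp only [DNF.holds, Cell.holds, List.mem_singleton, List.mem_cons,
      List.not_mem_nil, or_false, forall_eq_or_imp, forall_eq, Lin.eval_sub,
      exists_eq_left, List.not_mem_nil, false_implies, implies_true, and_true]
    rw [← Nat.cast_inj (R := ℤ), h1 x, h2 x]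
    omega
  | rel R ts =>
    cases R with
    | lt =>
      obtain ⟨L1, h1⟩ := term_lin v (ts 0)
      obtain ⟨L2, h2⟩ := term_lin v (ts 1)
      refine ⟨[⟨[(Lin.sub L1 L2).addConst 1], []⟩], fun x => ?_⟩
      dsimp only
      have : (BoundedFormula.rel PresRel.lt ts).Realize v x ↔
          Term.realize (Sum.elim v x) (ts 0) < Term.realize (Sum.elim v x) (ts 1) := Iff.rfl
      rw [this]
      simp only [DNF.holds, Cell.holds, List.mem_singleton, List.mem_cons,
        List.not_mem_nil, or_false, forall_eq, Lin.eval_addConst, Lin.eval_sub,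
        exists_eq_left, false_implies, implies_true, and_true]
      rw [← Nat.cast_lt (α := ℤ), h1 x, h2 x]
      omega
  | imp φ ψ ihφ ihψ =>
    obtain ⟨Dφ, hφ⟩ := ihφ
    obtain ⟨Dψ, hψ⟩ := ihψ
    refine ⟨DNF.union (complDNF Dφ) Dψ, fun x => ?_⟩
    dsimp only
    dsimp only at hφ hψ
    rw [BoundedFormula.realize_imp, DNF.holds_union, holds_complDNF, ← hφ x, ← hψ x]
    tauto
  | all φ ih =>
    obtain ⟨D, hD⟩ := ih
    refine ⟨complDNF (exDNF (complDNF D)), fun x => ?_⟩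
    dsimp only
    rw [BoundedFormula.realize_all, holds_complDNF, holds_exDNF]
    push_neg
    simp only [holds_complDNF, not_not]
    dsimp only at hD
    exact forall_congr' fun y => hD _




lemma eval_one (L : Lin 1) (n : ℕ) : L.eval ![n] = L.c + L.a 0 * (n : ℤ) := by
  simp [Lin.eval, Fin.sum_univ_one]

lemma ineq_eventually (L : Lin 1) (n : ℕ) (hn : L.c.natAbs + 1 ≤ n) :
    (L.eval ![n] ≤ 0) ↔ (L.a 0 < 0 ∨ (L.a 0 = 0 ∧ L.c ≤ 0)) := by
  rw [eval_one]
  have hn' : (L.c.natAbs : ℤ) + 1 ≤ (n : ℤ) := by exact_mod_cast hn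
  have hc1 : -(L.c.natAbs : ℤ) ≤ L.c ∧ L.c ≤ (L.c.natAbs : ℤ) := by omega
  rcases lt_trichotomy (L.a 0) 0 with h | h | h
  · have k1 : L.a 0 * (n : ℤ) ≤ -(n : ℤ) := by nlinarith [Int.natCast_nonneg n]
    exact iff_of_true (by linarith [hc1.2]) (Or.inl h)
  · simp [h]
  · have k1 : (n : ℤ) ≤ L.a 0 * (n : ℤ) :=
      le_mul_of_one_le_left (Int.natCast_nonneg n) (by omega)
    refine iff_of_false (by push_neg; linarith [hc1.1]) ?_
    rintro (h2 | ⟨h2, _⟩) <;> omega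

lemma ineq_period (L : Lin 1) (P : ℕ) (n : ℕ) (hn : L.c.natAbs + 1 ≤ n) :
    (L.eval ![n] ≤ 0) ↔ (L.eval ![n + P] ≤ 0) :=
  (ineq_eventually L n hn).trans (ineq_eventually L (n + P) (by omega)).symm

lemma div_period (d : ℕ) (L : Lin 1) (P : ℕ) (hdP : (d : ℤ) ∣ L.a 0 * (P : ℤ)) (n : ℕ) :
    ((d : ℤ) ∣ L.eval ![n]) ↔ ((d : ℤ) ∣ L.eval ![n + P]) := by
  rw [eval_one, eval_one]
  push_cast
  have he : L.c + L.a 0 * ((n : ℤ) + (P : ℤ)) = L.a 0 * (P : ℤ) + (L.c + L.a 0 * n) := by ring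
  rw [he, dvd_add_right hdP]

def Ncell (c : Cell 1) : ℕ := (c.ineqs.map (fun L => L.c.natAbs + 1)).foldr max 0

lemma le_foldr_max {l : List ℕ} {a : ℕ} (h : a ∈ l) : a ≤ l.foldr max 0 := by
  induction l with
  | nil => simp at h
  | cons b l ih =>
    rcases List.mem_cons.1 h with rfl | h
    · exact le_max_left _ _
    · exact (ih h).trans (le_max_right _ _)

lemma cell_period (c : Cell 1) (P : ℕ) (hdvd : ∀ p ∈ c.divs, p.1 ∣ P)
    (n : ℕ) (hn : Ncell c ≤ n) : c.holds ![n] ↔ c.holds ![n + P] := by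
  rw [Cell.holds, Cell.holds]
  apply and_congr
  · apply forall₂_congr
    intro L hL
    have h1 : L.c.natAbs + 1 ≤ n := by
      have hm : L.c.natAbs + 1 ∈ c.ineqs.map (fun L => L.c.natAbs + 1) :=
        List.mem_map_of_mem (f := fun L : Lin 1 => L.c.natAbs + 1) hL
      exact le_trans (le_foldr_max hm) hn
    exact ineq_period L P n h1
  · apply forall₂_congr
    intro p hp
    apply div_period
    have : (p.1 : ℤ) ∣ (P : ℤ) := by exact_mod_cast hdvd p hp
    exact this.mul_left _

lemma dnf_period (D : DNF 1) :
    ∃ N P : ℕ, 0 < P ∧ ∀ n : ℕ, N ≤ n → (D.holds ![n] ↔ D.holds ![n + P]) := by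
  set E : DNF 1 := D.map Cell.norm with hEdef
  have hE : ∀ x, D.holds x ↔ E.holds x := by
    intro x
    rw [DNF.holds, DNF.holds]
    constructor
    · rintro ⟨c, hc, hh⟩
      exact ⟨c.norm, List.mem_map_of_mem hc, (Cell.holds_norm c x).2 hh⟩
    · rintro ⟨e, he, hh⟩
      obtain ⟨c, hc, rfl⟩ := List.mem_map.1 he
      exact ⟨c, hc, (Cell.holds_norm c x).1 hh⟩
  set P : ℕ := (E.map (fun c => (c.divs.map Prod.fst).prod)).prod with hPdef
  have hP : 0 < P := by
    apply List.prod_pos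
    intro a ha
    obtain ⟨c, hc, rfl⟩ := List.mem_map.1 ha
    apply List.prod_pos
    intro d hd
    obtain ⟨p, hp, rfl⟩ := List.mem_map.1 hd
    obtain ⟨c', hc', rfl⟩ := List.mem_map.1 hc
    exact Cell.norm_pos c' p hp
  have hdvd : ∀ c ∈ E, ∀ p ∈ c.divs, p.1 ∣ P := by
    intro c hc p hp
    exact dvd_trans (List.dvd_prod (List.mem_map_of_mem hp))
      (List.dvd_prod (List.mem_map_of_mem hc))
  refine ⟨(E.map Ncell).foldr max 0, P, hP, fun n hn => ?_⟩
  rw [hE, hE, DNF.holds, DNF.holds]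
  apply exists_congr
  intro c
  apply and_congr_right
  intro hc
  exact cell_period c P (hdvd c hc) n
    (le_trans (le_foldr_max (List.mem_map_of_mem hc)) hn)


end PresProof

/-- **Presburger-definable sets are eventually periodic.** If `A ⊆ ℕ` is definable in
`⟨ℕ, +, <, 0, 1⟩`, then there are `N` and `p > 0` such that for all `n ≥ N`,
`n ∈ A ↔ n + p ∈ A`. -/
theorem presburger_definable_eventually_periodic (A : Set ℕ) (h : PresburgerDefinable A) :
    ∃ N p : ℕ, 0 < p ∧ ∀ n : ℕ, N ≤ n → (n ∈ A ↔ n + p ∈ A) := by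
  obtain ⟨k, φ, v, hA⟩ := h
  obtain ⟨D, hD⟩ := PresProof.defd_formula v φ
  obtain ⟨N, P, hP, hper⟩ := PresProof.dnf_period D
  refine ⟨N, P, hP, fun n hn => ?_⟩
  rw [hA, hA]
  have h1 := hD ![n]
  have h2 := hD ![n + P]
  dsimp only at h1 h2
  rw [h1, h2]
  exact hper n hn
end
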